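/- arXiv:2308.07385 — 4 statements merged into one kernel-verified Lean document; each statement's English description precedes it below -/
import Mathlib

section
/- Let Y be a metric space and X a reflexive Banach space. Let A : X × Y → X* satisfy: (i) for each y ∈ Y, A(·,y) is radially continuous and strictly monotone; (ii) for each u ∈ X, A(u,·) : Y → X* is continuous; (iii) for every y₀ ∈ Y there exists an open neighbourhood V of y₀ and a coercive function ρ : [0,∞) → ℝ (i.e., ρ(t) → ∞ as t → ∞) such that ⟨A(u,y), u⟩ ≥ ρ(‖u‖)·‖u‖ for all y ∈ V and u ∈ X. Then for every y ∈ Y there exists a unique u_y ∈ X with A(u_y, y) = 0, and if y_n → y in Y then u_{y_n} ⇀ u_y weakly in X. -/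
open Filter Topology



lemma quad_ineq {k : ℕ} (a : Fin k → Fin k → ℝ)
    (hm : ∀ i j, 0 ≤ a i i - a i j - a j i + a j j)
    (μ : Fin k → ℝ) (hμ0 : ∀ i, 0 ≤ μ i) (hμ1 : ∑ i, μ i = 1) :
    ∑ i, ∑ j, μ i * μ j * a i j ≤ ∑ i, μ i * a i i := by
  have h0 : 0 ≤ ∑ i, ∑ j, μ i * μ j * (a i i - a i j - a j i + a j j) := by
    refine Finset.sum_nonneg fun i _ => Finset.sum_nonneg fun j _ => ?_
    exact mul_nonneg (mul_nonneg (hμ0 i) (hμ0 j)) (hm i j)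
  have e1 : ∑ i, ∑ j, μ i * μ j * a i i = ∑ i, μ i * a i i := by
    refine Finset.sum_congr rfl fun i _ => ?_
    rw [show (∑ j, μ i * μ j * a i i) = (μ i * a i i) * ∑ j, μ j by
      rw [Finset.mul_sum]; exact Finset.sum_congr rfl fun j _ => by ring]
    rw [hμ1, mul_one]
  have e2 : ∑ i, ∑ j, μ i * μ j * a j j = ∑ i, μ i * a i i := by
    rw [Finset.sum_comm]
    refine Finset.sum_congr rfl fun j _ => ?_
    rw [show (∑ i, μ i * μ j * a j j) = (μ j * a j j) * ∑ i, μ i by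
      rw [Finset.mul_sum]; exact Finset.sum_congr rfl fun i _ => by ring]
    rw [hμ1, mul_one]
  have e3 : ∑ i, ∑ j, μ i * μ j * a j i = ∑ i, ∑ j, μ i * μ j * a i j := by
    rw [Finset.sum_comm]
    exact Finset.sum_congr rfl fun j _ => Finset.sum_congr rfl fun i _ => by ring
  have expand : ∑ i, ∑ j, μ i * μ j * (a i i - a i j - a j i + a j j)
      = (∑ i, ∑ j, μ i * μ j * a i i) - (∑ i, ∑ j, μ i * μ j * a i j)
        - (∑ i, ∑ j, μ i * μ j * a j i) + (∑ i, ∑ j, μ i * μ j * a j j) := by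
    simp only [mul_sub, mul_add, Finset.sum_add_distrib, Finset.sum_sub_distrib]
  rw [expand, e1, e2, e3] at h0
  linarith

lemma matrix_simplex_lemma {k : ℕ} (hk : 0 < k) (a : Fin k → Fin k → ℝ)
    (hm : ∀ i j, 0 ≤ a i i - a i j - a j i + a j j) :
    ∃ l : Fin k → ℝ, (∀ i, 0 ≤ l i) ∧ (∑ i, l i = 1) ∧ ∀ i, ∑ j, l j * a i j ≤ a i i := by
  by_contra hcon
  push_neg at hcon
  let T : (Fin k → ℝ) → (Fin k → ℝ) := fun l i => (∑ j, l j * a i j) - a i i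
  let C : Set (Fin k → ℝ) := {x | ∀ i, x i ≤ 0}
  let K : Set (Fin k → ℝ) := T '' stdSimplex ℝ (Fin k)
  have hdisj : Disjoint C K := by
    rw [Set.disjoint_right]
    rintro x ⟨l, hl, rfl⟩ hxC
    obtain ⟨i, hi⟩ := hcon l hl.1 hl.2
    exact absurd (hxC i) (not_le.2 (by simpa [T] using sub_pos.2 hi))
  have hCconv : Convex ℝ C := by
    intro x hx y hy s t hs ht hst
    intro i
    have h1 := hx i
    have h2 := hy i
    simp only [Pi.add_apply, Pi.smul_apply, smul_eq_mul]
    nlinarith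
  have hCclosed : IsClosed C := by
    have : C = ⋂ i, {x : Fin k → ℝ | x i ≤ 0} := by
      ext x; simp [C, Set.mem_iInter]
    rw [this]
    exact isClosed_iInter fun i => isClosed_le (continuous_apply i) continuous_const
  let L : (Fin k → ℝ) →ₗ[ℝ] (Fin k → ℝ) :=
    { toFun := fun l i => ∑ j, l j * a i j
      map_add' := by
        intro x y; funext i
        simp [add_mul, Finset.sum_add_distrib]
      map_smul' := by
        intro c x; funext i
        simp [Finset.mul_sum, smul_eq_mul, mul_assoc] }
  have hTeq : T = (fun z => (fun i => -(a i i)) + z) ∘ L := by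
    funext l i
    simp [T, L]
    ring
  have hKconv : Convex ℝ K := by
    have : K = (fun z => (fun i => -(a i i)) + z) '' (L '' stdSimplex ℝ (Fin k)) := by
      rw [← Set.image_comp, ← hTeq]
    rw [this]
    exact ((convex_stdSimplex ℝ (Fin k)).linear_image L).translate _
  have hTcont : Continuous T := by
    refine continuous_pi fun i => Continuous.sub ?_ continuous_const
    exact continuous_finset_sum _ fun j _ => (continuous_apply j).mul continuous_const
  have hKcomp : IsCompact K := (isCompact_stdSimplex _ _).image hTcont
  obtain ⟨f, u, v, hfC, huv, hfK⟩ :=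
    geometric_hahn_banach_closed_compact hCconv hCclosed hKconv hKcomp hdisj
  have hu0 : 0 < u := by
    have := hfC 0 (fun i => le_rfl)
    simpa using this
  set φ : Fin k → ℝ := fun i => f (fun j => if i = j then (1:ℝ) else 0) with hφdef
  have frepr : ∀ x : Fin k → ℝ, f x = ∑ i, x i * φ i := by
    intro x
    conv_lhs => rw [pi_eq_sum_univ x, map_sum]
    exact Finset.sum_congr rfl fun i _ => by rw [map_smul]; simp [smul_eq_mul, hφdef]
  have hφ0 : ∀ i, 0 ≤ φ i := by
    intro i
    by_contra h
    push_neg at h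
    set t : ℝ := (u + 1) / (-(φ i)) with ht
    have htpos : 0 < t := div_pos (by linarith) (by linarith)
    have hxC : ((-t) • fun j => if i = j then (1:ℝ) else 0) ∈ C := by
      intro j
      simp only [Pi.smul_apply, smul_eq_mul]
      by_cases hij : i = j <;> simp [hij] <;> nlinarith
    have hlt : -t * φ i < u := by
      have h2 := hfC _ hxC
      rwa [map_smul, smul_eq_mul] at h2
    have heval : -t * φ i = u + 1 := by
      have h3 : -t * φ i = (u + 1) / (-(φ i)) * (-(φ i)) := by rw [ht]; ring
      rw [h3, div_mul_cancel₀]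
      exact neg_ne_zero.2 (ne_of_lt h)
    linarith
  set s := ∑ i, φ i with hsdef
  have hsnn : 0 ≤ s := Finset.sum_nonneg fun i _ => hφ0 i
  have hk0 : (k:ℝ) ≠ 0 := Nat.cast_ne_zero.2 hk.ne'
  have hmemstd : (fun _ : Fin k => (k:ℝ)⁻¹) ∈ stdSimplex ℝ (Fin k) := by
    constructor
    · intro i; positivity
    · rw [Finset.sum_const, Finset.card_univ, Fintype.card_fin, nsmul_eq_mul]
      field_simp
  have hKne : K.Nonempty := ⟨T (fun _ => (k:ℝ)⁻¹), Set.mem_image_of_mem T hmemstd⟩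
  have hs : 0 < s := by
    rcases lt_or_eq_of_le hsnn with h | h
    · exact h
    · exfalso
      have hall : ∀ i ∈ Finset.univ, φ i = 0 :=
        (Finset.sum_eq_zero_iff_of_nonneg (fun i _ => hφ0 i)).1 h.symm
      obtain ⟨p, hp⟩ := hKne
      have : f p = 0 := by
        rw [frepr p]
        exact Finset.sum_eq_zero fun i _ => by rw [hall i (Finset.mem_univ i), mul_zero]
      have := hfK p hp
      linarith
  set μ : Fin k → ℝ := fun i => φ i / s with hμdef
  have hμ0 : ∀ i, 0 ≤ μ i := fun i => div_nonneg (hφ0 i) hsnn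
  have hμ1 : ∑ i, μ i = 1 := by
    rw [hμdef]
    simp only
    rw [← Finset.sum_div, ← hsdef, div_self (ne_of_gt hs)]
  have hTμ : v < f (T μ) := hfK _ ⟨μ, ⟨hμ0, hμ1⟩, rfl⟩
  have hq := quad_ineq a hm μ hμ0 hμ1
  have hfTμ : f (T μ) = s * (∑ i, ∑ j, μ i * μ j * a i j - ∑ i, μ i * a i i) := by
    rw [frepr (T μ)]
    have : ∀ i, T μ i * φ i = s * (μ i * ((∑ j, μ j * a i j) - a i i)) := by
      intro i
      have hφi : φ i = s * μ i := by
        rw [hμdef]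
        field_simp
      rw [hφi]
      simp [T]
      ring
    rw [Finset.sum_congr rfl fun i _ => this i, ← Finset.mul_sum]
    congr 1
    calc ∑ i, μ i * ((∑ j, μ j * a i j) - a i i)
        = ∑ i, ((∑ j, μ i * (μ j * a i j)) - μ i * a i i) := by
          refine Finset.sum_congr rfl fun i _ => ?_
          rw [mul_sub, Finset.mul_sum]
      _ = ∑ i, ∑ j, μ i * μ j * a i j - ∑ i, μ i * a i i := by
          rw [Finset.sum_sub_distrib]
          congr 1
          exact Finset.sum_congr rfl fun i _ => Finset.sum_congr rfl fun j _ => by ring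
  nlinarith

section X
variable {X : Type*} [NormedAddCommGroup X] [NormedSpace ℝ X]

-- finitely many test points lemma
lemma finite_sol (B : X → StrongDual ℝ X)
    (hmono : ∀ u w : X, 0 ≤ (B u - B w) (u - w))
    {k : ℕ} (hk : 0 < k) (w : Fin k → X) {R : ℝ} (hR : ∀ i, ‖w i‖ ≤ R) :
    ∃ u : X, ‖u‖ ≤ R ∧ ∀ i, B (w i) u ≤ B (w i) (w i) := by
  set a : Fin k → Fin k → ℝ := fun i j => B (w i) (w j) with ha
  have hm : ∀ i j, 0 ≤ a i i - a i j - a j i + a j j := by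
    intro i j
    have h := hmono (w i) (w j)
    simp only [ContinuousLinearMap.sub_apply, map_sub] at h
    simp only [a]
    linarith
  obtain ⟨l, hl0, hl1, hl⟩ := matrix_simplex_lemma hk a hm
  refine ⟨∑ j, l j • w j, ?_, ?_⟩
  · calc ‖∑ j, l j • w j‖ ≤ ∑ j, ‖l j • w j‖ := norm_sum_le _ _
      _ ≤ ∑ j, l j * R := by
          refine Finset.sum_le_sum fun j _ => ?_
          rw [norm_smul, Real.norm_eq_abs, abs_of_nonneg (hl0 j)]
          exact mul_le_mul_of_nonneg_left (hR j) (hl0 j)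
      _ = R := by rw [← Finset.sum_mul, hl1, one_mul]
  · intro i
    have : B (w i) (∑ j, l j • w j) = ∑ j, l j * a i j := by
      rw [map_sum]
      exact Finset.sum_congr rfl fun j _ => by rw [map_smul]; simp [a]
    rw [this]
    exact hl i

-- Minty radial limit lemma
lemma minty_limit {Y : Type*} [MetricSpace Y] (A : X → Y → StrongDual ℝ X)
    (hrad : ∀ (y : Y) (u w : X),
      ContinuousOn (fun t : ℝ => A (u + t • w) y w) (Set.Icc (0 : ℝ) 1))
    (y : Y) (u v : X) (h : ∀ t ∈ Set.Ioc (0:ℝ) 1, 0 ≤ A (u + t • v) y v) :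
    0 ≤ A u y v := by
  have hc : ContinuousWithinAt (fun t : ℝ => A (u + t • v) y v) (Set.Icc (0:ℝ) 1) 0 :=
    (hrad y u v) 0 (Set.mem_Icc.2 ⟨le_refl _, zero_le_one⟩)
  have hc' : Tendsto (fun t : ℝ => A (u + t • v) y v) (𝓝[Set.Ioc (0:ℝ) 1] 0)
      (𝓝 (A (u + (0:ℝ) • v) y v)) :=
    hc.tendsto.mono_left (nhdsWithin_mono _ Set.Ioc_subset_Icc_self)
  have hne : (𝓝[Set.Ioc (0:ℝ) 1] (0:ℝ)).NeBot := left_nhdsWithin_Ioc_neBot zero_lt_one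
  have h0 : 0 ≤ A (u + (0:ℝ) • v) y v := by
    refine ge_of_tendsto hc' ?_
    filter_upwards [self_mem_nhdsWithin] with t ht
    exact h t ht
  simpa using h0

end X

-- compactness: unique cluster point implies convergence
lemma tendsto_of_unique_clusterPt {α : Type*} [TopologicalSpace α] {s : Set α}
    (hs : IsCompact s) {F : Filter α} [F.NeBot] (hmem : s ∈ F) {x : α}
    (hx : ∀ y, ClusterPt y F → y = x) : F ≤ 𝓝 x := by
  rw [le_nhds_iff]
  intro U hxU hU
  have hbot : F ⊓ 𝓟 Uᶜ = ⊥ := by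
    by_contra hne
    have : (F ⊓ 𝓟 Uᶜ).NeBot := ⟨hne⟩
    have hle : F ⊓ 𝓟 Uᶜ ≤ 𝓟 s := le_trans inf_le_left (Filter.le_principal_iff.2 hmem)
    obtain ⟨y, hy, hcl⟩ := hs.exists_clusterPt hle
    have hyx : y = x := hx y (hcl.mono inf_le_left)
    have : y ∈ Uᶜ := by
      have hcl2 : ClusterPt y (𝓟 Uᶜ) := hcl.mono inf_le_right
      have := mem_closure_iff_clusterPt.2 hcl2
      rwa [IsClosed.closure_eq (isClosed_compl_iff.2 hU)] at this
    rw [hyx] at this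
    exact this hxU
  have := Filter.inf_principal_eq_bot.1 hbot
  rwa [compl_compl] at this

section Main
variable {X : Type*} [NormedAddCommGroup X] [NormedSpace ℝ X] [CompleteSpace X]
variable {Y : Type*} [MetricSpace Y] (A : X → Y → StrongDual ℝ X)


-- nonneg monotonicity from strict
lemma mono_nonneg (hmono : ∀ (y : Y) (u w : X), u ≠ w → 0 < (A u y - A w y) (u - w))
    (y : Y) (u w : X) : 0 ≤ (A u y - A w y) (u - w) := by
  rcases eq_or_ne u w with rfl | hne
  · simp
  · exact (hmono y u w hne).le

-- A u y = 0 from global Minty inequality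
lemma zero_of_global_vi
    (hrad : ∀ (y : Y) (u w : X),
      ContinuousOn (fun t : ℝ => A (u + t • w) y w) (Set.Icc (0 : ℝ) 1))
    (y : Y) (u : X) (h : ∀ w : X, 0 ≤ A w y (w - u)) : A u y = 0 := by
  have hall : ∀ v : X, 0 ≤ A u y v := by
    intro v
    refine minty_limit A hrad y u v fun t ht => ?_
    have h2 := h (u + t • v)
    rw [add_sub_cancel_left, map_smul, smul_eq_mul] at h2
    exact (mul_nonneg_iff_of_pos_left ht.1).1 h2
  refine ContinuousLinearMap.ext fun v => ?_
  have h1 := hall v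
  have h2 := hall (-v)
  rw [map_neg] at h2
  simp only [ContinuousLinearMap.zero_apply]
  linarith

-- existence of a zero for a fixed parameter value
lemma exists_zero
    (hrefl : Function.Surjective (NormedSpace.inclusionInDoubleDual ℝ X))
    (hrad : ∀ (y : Y) (u w : X),
      ContinuousOn (fun t : ℝ => A (u + t • w) y w) (Set.Icc (0 : ℝ) 1))
    (hmono : ∀ (y : Y) (u w : X), u ≠ w → 0 < (A u y - A w y) (u - w))
    (y : Y) (ρ : ℝ → ℝ) (hρ : Tendsto ρ atTop atTop)
    (hcoerc : ∀ u : X, A u y u ≥ ρ ‖u‖ * ‖u‖) :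
    ∃ u : X, A u y = 0 := by
  obtain ⟨R₀, hR₀⟩ := eventually_atTop.1 (hρ.eventually_ge_atTop 1)
  set R₁ : ℝ := max R₀ 1 with hR₁def
  have hR₁1 : (1:ℝ) ≤ R₁ := le_max_right _ _
  set R : ℝ := R₁ + 1 with hRdef
  have hR0 : (0:ℝ) ≤ R := by linarith
  set J := NormedSpace.inclusionInDoubleDual ℝ X with hJdef
  set g : X → WeakDual ℝ (StrongDual ℝ X) :=
    fun x => StrongDual.toWeakDual (J x) with hgdef
  have hgapp : ∀ (x : X) (f : StrongDual ℝ X), g x f = f x := fun x f => rfl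
  set sD : Set (WeakDual ℝ (StrongDual ℝ X)) :=
    WeakDual.toStrongDual ⁻¹' Metric.closedBall 0 R with hsDdef
  have hsD : IsCompact sD := WeakDual.isCompact_closedBall (𝕜 := ℝ) (0 : StrongDual ℝ (StrongDual ℝ X)) R
  set Z : {w : X // ‖w‖ ≤ R} → Set (WeakDual ℝ (StrongDual ℝ X)) :=
    fun w => {φ | φ (A w.1 y) ≤ A w.1 y w.1} with hZdef
  have hZclosed : ∀ w, IsClosed (Z w) :=
    fun w => isClosed_le (WeakDual.eval_continuous (A w.1 y)) continuous_const
  have hnorm_g : ∀ x : X, ‖J x‖ = ‖x‖ := fun x =>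
    (NormedSpace.inclusionInDoubleDualLi (𝕜 := ℝ) (E := X)).norm_map x
  have hgmem : ∀ x : X, ‖x‖ ≤ R → g x ∈ sD := by
    intro x hx
    simp only [hsDdef, Set.mem_preimage, Metric.mem_closedBall, dist_zero_right]
    calc dist (WeakDual.toStrongDual (g x)) 0 = ‖J x‖ := dist_zero_right (J x)
      _ = ‖x‖ := hnorm_g x
      _ ≤ R := hx
  have hnonempty : (sD ∩ ⋂ w, Z w).Nonempty := by
    by_contra hemp
    rw [Set.not_nonempty_iff_eq_empty] at hemp
    obtain ⟨t, ht⟩ := hsD.elim_finite_subfamily_closed Z hZclosed hemp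
    rcases t.eq_empty_or_nonempty with rfl | htne
    · simp only [Finset.notMem_empty, Set.iInter_of_empty, Set.iInter_false,
        Set.iInter_univ, Set.inter_univ] at ht
      have : g 0 ∈ sD := hgmem 0 (by simpa using hR0)
      rw [ht] at this
      exact this
    · set k := t.card with hkdef
      have hk : 0 < k := Finset.card_pos.2 htne
      set e := t.equivFin with hedef
      set w : Fin k → X := fun i => ((e.symm i : {x // x ∈ t}) : {w : X // ‖w‖ ≤ R}).1
        with hwdef
      have hwR : ∀ i, ‖w i‖ ≤ R := fun i => ((e.symm i : {x // x ∈ t}) :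
        {w : X // ‖w‖ ≤ R}).2
      obtain ⟨u, huR, huI⟩ := finite_sol (fun x => A x y)
        (fun u v => mono_nonneg A hmono y u v) hk w hwR
      have : g u ∈ sD ∩ ⋂ i ∈ t, Z i := by
        refine ⟨hgmem u huR, ?_⟩
        rw [Set.mem_iInter₂]
        intro i hi
        have h2 := huI (e ⟨i, hi⟩)
        have hwi : w (e ⟨i, hi⟩) = i.1 := by
          rw [hwdef]
          simp [Equiv.symm_apply_apply]
        rw [hwi] at h2
        simpa only [hZdef, Set.mem_setOf_eq, hgapp] using h2
      rw [ht] at this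
      exact this
  obtain ⟨φ, hφs, hφZ⟩ := hnonempty
  rw [Set.mem_iInter] at hφZ
  obtain ⟨u, hJu⟩ := hrefl (WeakDual.toStrongDual φ)
  have hφu : ∀ f : StrongDual ℝ X, φ f = f u := by
    intro f
    have : (WeakDual.toStrongDual φ) f = f u := by
      rw [← hJu]; rfl
    exact this
  have huR : ‖u‖ ≤ R := by
    have := hφs
    simp only [hsDdef, Set.mem_preimage, Metric.mem_closedBall, dist_zero_right] at this
    calc ‖u‖ = ‖J u‖ := (hnorm_g u).symm
      _ = ‖WeakDual.toStrongDual φ‖ := by rw [hJu]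
      _ ≤ R := ((dist_zero_right (WeakDual.toStrongDual φ)).symm.le).trans this
  have hVI : ∀ w : X, ‖w‖ ≤ R → A w y u ≤ A w y w := by
    intro w hw
    have := hφZ ⟨w, hw⟩
    simp only [hZdef, Set.mem_setOf_eq, hφu] at this
    exact this
  -- stage A
  have hA : ∀ w : X, ‖w‖ ≤ R → 0 ≤ A u y (w - u) := by
    intro w hw
    refine minty_limit A hrad y u (w - u) fun t ht => ?_
    have hwt : ‖u + t • (w - u)‖ ≤ R := by
      have heq : u + t • (w - u) = (1 - t) • u + t • w := by
        rw [smul_sub, sub_smul, one_smul]; abel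
      rw [heq]
      calc ‖(1 - t) • u + t • w‖ ≤ ‖(1 - t) • u‖ + ‖t • w‖ := norm_add_le _ _
        _ ≤ (1 - t) * R + t * R := by
            rw [norm_smul, norm_smul, Real.norm_eq_abs, Real.norm_eq_abs,
              abs_of_nonneg (by linarith [ht.2] : (0:ℝ) ≤ 1 - t),
              abs_of_nonneg ht.1.le]
            exact add_le_add (mul_le_mul_of_nonneg_left huR (by linarith [ht.2]))
              (mul_le_mul_of_nonneg_left hw ht.1.le)
        _ = R := by ring
    have h2 := hVI _ hwt
    have h3 : 0 ≤ A (u + t • (w - u)) y ((u + t • (w - u)) - u) := by linarith [h2,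
      (by rw [map_sub] : A (u + t • (w - u)) y ((u + t • (w - u)) - u)
        = A (u + t • (w - u)) y (u + t • (w - u)) - A (u + t • (w - u)) y u)]
    rw [add_sub_cancel_left, map_smul, smul_eq_mul] at h3
    exact (mul_nonneg_iff_of_pos_left ht.1).1 h3
  -- stage B
  have hub : A u y u ≤ 0 := by
    have := hA 0 (by simpa using hR0)
    rw [zero_sub, map_neg] at this
    linarith
  have huR₁ : ‖u‖ ≤ R₁ := by
    by_contra h
    push_neg at h
    have h1 : 1 ≤ ρ ‖u‖ := hR₀ _ (le_trans (le_max_left _ _) h.le)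
    have h2 := hcoerc u
    have h3 : (1:ℝ) ≤ ‖u‖ := le_trans hR₁1 h.le
    have h4 : 1 * ‖u‖ ≤ ρ ‖u‖ * ‖u‖ := mul_le_mul_of_nonneg_right h1 (by linarith)
    rw [one_mul] at h4
    linarith
  -- stage C
  have hall : ∀ v : X, 0 ≤ A u y v := by
    intro v
    set t₀ : ℝ := (‖v‖ + 1)⁻¹ with ht₀def
    have hvpos : (0:ℝ) < ‖v‖ + 1 := by positivity
    have ht₀ : 0 < t₀ := inv_pos.2 hvpos
    have hw : ‖u + t₀ • v‖ ≤ R := by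
      calc ‖u + t₀ • v‖ ≤ ‖u‖ + ‖t₀ • v‖ := norm_add_le _ _
        _ ≤ R₁ + 1 := by
            refine add_le_add huR₁ ?_
            rw [norm_smul, Real.norm_eq_abs, abs_of_nonneg ht₀.le, ht₀def]
            rw [inv_mul_le_iff₀ hvpos]
            linarith
        _ = R := hRdef.symm
    have := hA _ hw
    rw [add_sub_cancel_left, map_smul, smul_eq_mul] at this
    exact (mul_nonneg_iff_of_pos_left ht₀).1 this
  refine ⟨u, ContinuousLinearMap.ext fun v => ?_⟩
  have h1 := hall v
  have h2 := hall (-v)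
  rw [map_neg] at h2
  simp only [ContinuousLinearMap.zero_apply]
  linarith

lemma weak_cont (A : X → Y → StrongDual ℝ X)
    (hrefl : Function.Surjective (NormedSpace.inclusionInDoubleDual ℝ X))
    (hrad : ∀ (y : Y) (u w : X),
      ContinuousOn (fun t : ℝ => A (u + t • w) y w) (Set.Icc (0 : ℝ) 1))
    (hmono : ∀ (y : Y) (u w : X), u ≠ w → 0 < (A u y - A w y) (u - w))
    (hcont : ∀ u : X, Continuous fun y : Y => A u y)
    (hcoer : ∀ y₀ : Y, ∃ V : Set Y, IsOpen V ∧ y₀ ∈ V ∧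
      ∃ ρ : ℝ → ℝ, Tendsto ρ atTop atTop ∧
        ∀ y ∈ V, ∀ u : X, A u y u ≥ ρ ‖u‖ * ‖u‖) :
    ∀ S : Y → X, (∀ y : Y, A (S y) y = 0) →
      ∀ (yseq : ℕ → Y) (y : Y), Tendsto yseq atTop (𝓝 y) →
        ∀ f : StrongDual ℝ X,
          Tendsto (fun n => f (S (yseq n))) atTop (𝓝 (f (S y))) := by
  intro S hS yseq y hy f
  obtain ⟨V, hVopen, hyV, ρ, hρ, hcoerV⟩ := hcoer y
  obtain ⟨R₀, hR₀⟩ := eventually_atTop.1 (hρ.eventually_ge_atTop 1)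
  set R₁ : ℝ := max R₀ 1 with hR₁def
  have hR₁1 : (1:ℝ) ≤ R₁ := le_max_right _ _
  have hbound : ∀ y' ∈ V, ‖S y'‖ ≤ R₁ := by
    intro y' hy'
    by_contra h
    push_neg at h
    have h0 : A (S y') y' (S y') = 0 := by rw [hS y']; rfl
    have h1 : 1 ≤ ρ ‖S y'‖ := hR₀ _ (le_trans (le_max_left _ _) h.le)
    have h2 := hcoerV y' hy' (S y')
    have h3 : (1:ℝ) ≤ ‖S y'‖ := le_trans hR₁1 h.le
    have h4 : 1 * ‖S y'‖ ≤ ρ ‖S y'‖ * ‖S y'‖ := mul_le_mul_of_nonneg_right h1 (by linarith)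
    rw [one_mul] at h4
    linarith
  set J := NormedSpace.inclusionInDoubleDual ℝ X with hJdef
  set g : ℕ → WeakDual ℝ (StrongDual ℝ X) :=
    fun n => StrongDual.toWeakDual (J (S (yseq n))) with hgdef
  have hgapp : ∀ (n : ℕ) (h : StrongDual ℝ X), g n h = h (S (yseq n)) :=
    fun n h => rfl
  set sD : Set (WeakDual ℝ (StrongDual ℝ X)) :=
    WeakDual.toStrongDual ⁻¹' Metric.closedBall 0 R₁ with hsDdef
  have hsD : IsCompact sD :=
    WeakDual.isCompact_closedBall (𝕜 := ℝ) (0 : StrongDual ℝ (StrongDual ℝ X)) R₁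
  have hnorm_g : ∀ x : X, ‖J x‖ = ‖x‖ := fun x =>
    (NormedSpace.inclusionInDoubleDualLi (𝕜 := ℝ) (E := X)).norm_map x
  set F : Filter (WeakDual ℝ (StrongDual ℝ X)) := Filter.map g atTop with hFdef
  have hFne : F.NeBot := Filter.map_neBot
  have hev : ∀ᶠ n in atTop, yseq n ∈ V := hy (hVopen.mem_nhds hyV)
  have hmemF : sD ∈ F := by
    rw [hFdef, Filter.mem_map]
    filter_upwards [hev] with n hn
    simp only [hsDdef, Set.mem_preimage, Metric.mem_closedBall, dist_zero_right]
    calc dist (WeakDual.toStrongDual (g n)) 0 = ‖J (S (yseq n))‖ := dist_zero_right (J (S (yseq n)))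
      _ = ‖S (yseq n)‖ := hnorm_g _
      _ ≤ R₁ := hbound _ hn
  have hclus : ∀ φ, ClusterPt φ F → φ = StrongDual.toWeakDual (J (S y)) := by
    intro φ hφ
    obtain ⟨u, hJu⟩ := hrefl (WeakDual.toStrongDual φ)
    have hφu : ∀ h : StrongDual ℝ X, φ h = h u := by
      intro h
      have : (WeakDual.toStrongDual φ) h = h u := by rw [← hJu]; rfl
      exact this
    -- the subsequence-like filter
    set G : Filter ℕ := atTop ⊓ Filter.comap g (𝓝 φ) with hGdef
    have hGne : G.NeBot := by
      rw [ClusterPt] at hφ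
      have hpp : Filter.map g G = 𝓝 φ ⊓ Filter.map g atTop := by
        rw [hGdef, inf_comm atTop, Filter.push_pull']
      refine Filter.NeBot.of_map (m := g) ?_
      rw [hpp]
      exact hφ
    have hgG : Tendsto g G (𝓝 φ) := tendsto_comap.mono_left inf_le_right
    have key : ∀ w : X, 0 ≤ A w y (w - u) := by
      intro w
      have hcw : Tendsto (fun n => A w (yseq n)) atTop (𝓝 (A w y)) :=
        ((hcont w).tendsto y).comp hy
      have t1 : Tendsto (fun n => A w (yseq n) w) atTop (𝓝 (A w y w)) :=
        ((ContinuousLinearMap.apply ℝ ℝ w).continuous.tendsto _).comp hcw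
      have t2 : Tendsto (fun n => (A w (yseq n) - A w y) (S (yseq n))) atTop (𝓝 0) := by
        have hnt : Tendsto (fun n => ‖A w (yseq n) - A w y‖ * R₁) atTop (𝓝 0) := by
          have := (tendsto_iff_norm_sub_tendsto_zero.1 hcw).mul_const R₁
          rwa [zero_mul] at this
        refine squeeze_zero_norm' ?_ hnt
        filter_upwards [hev] with n hn
        calc ‖(A w (yseq n) - A w y) (S (yseq n))‖
            ≤ ‖A w (yseq n) - A w y‖ * ‖S (yseq n)‖ :=
              (A w (yseq n) - A w y).le_opNorm _
          _ ≤ ‖A w (yseq n) - A w y‖ * R₁ :=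
              mul_le_mul_of_nonneg_left (hbound _ hn) (norm_nonneg _)
      have t3 : Tendsto (fun n => A w y (S (yseq n))) G (𝓝 (φ (A w y))) := by
        have := ((WeakDual.eval_continuous (A w y)).tendsto φ).comp hgG
        exact this
      have tall : Tendsto (fun n => A w (yseq n) (w - S (yseq n))) G
          (𝓝 (A w y w - 0 - φ (A w y))) := by
        have := ((t1.mono_left inf_le_left).sub (t2.mono_left inf_le_left)).sub t3
        refine this.congr fun n => ?_
        simp only [map_sub, ContinuousLinearMap.sub_apply]
        ring
      have hnn : ∀ᶠ n in G, 0 ≤ A w (yseq n) (w - S (yseq n)) := by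
        refine Filter.Eventually.of_forall fun n => ?_
        rcases eq_or_ne w (S (yseq n)) with heq | hne
        · rw [heq, sub_self, map_zero]
        · have := hmono (yseq n) w (S (yseq n)) hne
          rw [hS (yseq n), sub_zero] at this
          exact this.le
      have hge := ge_of_tendsto tall hnn
      have : A w y (w - u) = A w y w - 0 - φ (A w y) := by
        rw [hφu, map_sub]; ring
      rw [this]
      exact hge
    have hz : A u y = 0 := zero_of_global_vi A hrad y u key
    have huSy : u = S y := by
      by_contra hne
      have := hmono y u (S y) hne
      rw [hz, hS y, sub_zero] at this
      simp at this
    refine DFunLike.ext _ _ fun h => ?_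
    rw [hφu, huSy]
    rfl
  have hle : F ≤ 𝓝 (StrongDual.toWeakDual (J (S y))) :=
    tendsto_of_unique_clusterPt hsD hmemF hclus
  have hgt : Tendsto g atTop (𝓝 (StrongDual.toWeakDual (J (S y)))) := hle
  have := ((WeakDual.eval_continuous f).tendsto _).comp hgt
  exact this


end Main

/-- Parametric version of the Browder–Minty theorem. -/
theorem parametric_browder_minty
    {X : Type*} [NormedAddCommGroup X] [NormedSpace ℝ X] [CompleteSpace X]
    (hrefl : Function.Surjective (NormedSpace.inclusionInDoubleDual ℝ X))
    {Y : Type*} [MetricSpace Y]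
    (A : X → Y → StrongDual ℝ X)
    -- radial continuity of A(·,y)
    (hrad : ∀ (y : Y) (u w : X),
      ContinuousOn (fun t : ℝ => A (u + t • w) y w) (Set.Icc (0 : ℝ) 1))
    -- strict monotonicity of A(·,y)
    (hmono : ∀ (y : Y) (u w : X), u ≠ w → 0 < (A u y - A w y) (u - w))
    -- continuity of A(u,·)
    (hcont : ∀ u : X, Continuous fun y : Y => A u y)
    -- local (in the parameter) uniform coercivity
    (hcoer : ∀ y₀ : Y, ∃ V : Set Y, IsOpen V ∧ y₀ ∈ V ∧
      ∃ ρ : ℝ → ℝ, Tendsto ρ atTop atTop ∧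
        ∀ y ∈ V, ∀ u : X, A u y u ≥ ρ ‖u‖ * ‖u‖) :
    (∀ y : Y, ∃! u : X, A u y = 0) ∧
    ∀ S : Y → X, (∀ y : Y, A (S y) y = 0) →
      ∀ (yseq : ℕ → Y) (y : Y), Tendsto yseq atTop (𝓝 y) →
        ∀ f : StrongDual ℝ X,
          Tendsto (fun n => f (S (yseq n))) atTop (𝓝 (f (S y))) := by
  constructor
  · intro y
    obtain ⟨V, hVopen, hyV, ρ, hρ, hcoerV⟩ := hcoer y
    obtain ⟨u, hu⟩ := exists_zero A hrefl hrad hmono y ρ hρ (hcoerV y hyV)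
    refine ⟨u, hu, fun v hv => ?_⟩
    by_contra hne
    have := hmono y v u hne
    rw [hv, hu] at this
    simp at this
  · exact weak_cont A hrefl hrad hmono hcont hcoer
end

section
/- Let Y be a metric space and X a reflexive Banach space. Let F : X × Y → X* satisfy: F(·,y) is radially continuous for all y ∈ Y; F(u,·) is continuous for all u ∈ X; and there exists m > 0 such that ⟨F(u,y) − F(w,y), u − w⟩ ≥ m·‖u − w‖² for all y ∈ Y and u, w ∈ X. Then for every y ∈ Y there is a unique u_y with F(u_y, y) = 0, and y_n → y implies u_{y_n} → u_y strongly in X. -/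
open Filter Topology Set MeasureTheory ContinuousLinearMap
open scoped Convolution

namespace SMP

local notation "⟪" x ", " y "⟫" => @inner ℝ _ _ x y


variable {E : Type*} [NormedAddCommGroup E] [InnerProductSpace ℝ E]


lemma radial_tendsto {G : E → E}
    (rad : ∀ u w : E, ContinuousOn (fun t : ℝ => ⟪G (u + t • w), w⟫) (Icc (0:ℝ) 1))
    (x w : E) :
    Tendsto (fun t : ℝ => ⟪G (x + t • w), w⟫) (𝓝[>] (0:ℝ)) (𝓝 ⟪G x, w⟫) := by
  have h := (rad x w) 0 ⟨le_refl 0, zero_le_one⟩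
  rw [ContinuousWithinAt] at h
  simp only [zero_smul, add_zero] at h
  have heq : 𝓝[Ioc (0:ℝ) 1] (0:ℝ) = 𝓝[>] (0:ℝ) := nhdsWithin_Ioc_eq_nhdsGT one_pos
  refine h.mono_left ?_
  rw [← heq]
  exact nhdsWithin_mono _ Ioc_subset_Icc_self

lemma minty {G : E → E}
    (rad : ∀ u w : E, ContinuousOn (fun t : ℝ => ⟪G (u + t • w), w⟫) (Icc (0:ℝ) 1))
    {x g : E} (h : ∀ v, 0 ≤ ⟪g - G v, x - v⟫) : g = G x := by
  have key : ∀ w, ⟪g, w⟫ ≤ ⟪G x, w⟫ := by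
    intro w
    have hle : ∀ t ∈ Ioc (0:ℝ) 1, ⟪g, w⟫ ≤ ⟪G (x + t • w), w⟫ := by
      intro t ht
      have h1 := h (x + t • w)
      have h2 : x - (x + t • w) = -(t • w) := by abel
      rw [h2, inner_neg_right, inner_smul_right, inner_sub_left] at h1
      nlinarith [ht.1]
    have lim := radial_tendsto rad x w
    have hev : ∀ᶠ t in 𝓝[>] (0:ℝ), ⟪g, w⟫ ≤ ⟪G (x + t • w), w⟫ := by
      filter_upwards [Ioc_mem_nhdsGT_of_mem (⟨le_refl (0:ℝ), zero_lt_one⟩ : (0:ℝ) ∈ Ico (0:ℝ) 1)] with t ht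
      exact hle t ht
    exact ge_of_tendsto lim hev
  have h2 : ∀ w, ⟪g - G x, w⟫ ≤ 0 := by
    intro w
    rw [inner_sub_left]
    linarith [key w]
  have h3 := h2 (g - G x)
  have h4 : g - G x = 0 := by
    have := real_inner_self_nonneg (x := g - G x)
    have h5 : ⟪g - G x, g - G x⟫ = 0 := le_antisymm h3 this
    exact inner_self_eq_zero.mp h5
  rw [sub_eq_zero] at h4
  exact h4

set_option maxHeartbeats 1000000 in
lemma bounded_of_mono [FiniteDimensional ℝ E] {G : E → E}
    (mono : ∀ u w : E, 0 ≤ ⟪G u - G w, u - w⟫) {xk : ℕ → E} {x : E}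
    (hx : Tendsto xk atTop (𝓝 x)) : ∃ C, ∀ k, ‖G (xk k)‖ ≤ C := by
  by_contra hC
  push_neg at hC
  choose k hk using hC
  set κ : ℕ → ℕ := fun n => k n with hκdef
  have hκn : ∀ n : ℕ, (n : ℝ) < ‖G (xk (κ n))‖ := fun n => hk n
  have hκtop : Tendsto κ atTop atTop := by
    rw [tendsto_atTop]
    intro b
    set M := (Finset.range b).sup (fun j => ⌈‖G (xk j)‖⌉₊) with hM
    filter_upwards [eventually_gt_atTop M] with n hn
    by_contra hlt
    push_neg at hlt
    have h1 : ‖G (xk (κ n))‖ ≤ (M : ℝ) := by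
      calc ‖G (xk (κ n))‖ ≤ (⌈‖G (xk (κ n))‖⌉₊ : ℝ) := Nat.le_ceil _
        _ ≤ (M : ℝ) := by
          exact_mod_cast Finset.le_sup (f := fun j => ⌈‖G (xk j)‖⌉₊) (Finset.mem_range.mpr hlt)
    have h2 := hκn n
    have : (n : ℝ) < (M : ℝ) := lt_of_lt_of_le h2 h1
    exact absurd (by exact_mod_cast this) (not_lt.mpr hn.le)
  have hpos : ∀ n : ℕ, 0 < ‖G (xk (κ (n+1)))‖ := by
    intro n
    have := hκn (n+1)
    have h0 : (0:ℝ) < ((n:ℝ)+1) := by positivity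
    push_cast at this
    linarith
  set y : ℕ → E := fun n => ‖G (xk (κ (n+1)))‖⁻¹ • G (xk (κ (n+1))) with hydef
  have hy1 : ∀ n, ‖y n‖ = 1 := by
    intro n
    rw [hydef]
    simp only [norm_smul, norm_inv, norm_norm]
    exact inv_mul_cancel₀ (hpos n).ne'
  have hyball : ∀ n, y n ∈ Metric.closedBall (0:E) 1 := by
    intro n; simp [hy1 n]
  obtain ⟨g, _, φ, hφ, hglim⟩ := (isCompact_closedBall (0:E) 1).tendsto_subseq hyball
  have hgnorm : ‖g‖ = 1 := by
    have h1 : Tendsto (fun n => ‖y (φ n)‖) atTop (𝓝 ‖g‖) := hglim.norm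
    have h2 : Tendsto (fun _ : ℕ => (1:ℝ)) atTop (𝓝 ‖g‖) := by
      refine h1.congr fun n => ?_
      exact (hy1 (φ n))
    exact tendsto_nhds_unique h2 tendsto_const_nhds
  set j : ℕ → ℕ := fun n => κ (φ n + 1) with hjdef
  have hjtop : Tendsto j atTop atTop :=
    hκtop.comp ((tendsto_add_atTop_nat 1).comp hφ.tendsto_atTop)
  have hxj : Tendsto (fun n => xk (j n)) atTop (𝓝 x) := hx.comp hjtop
  have hnorm_top : Tendsto (fun n => ‖G (xk (j n))‖) atTop atTop := by
    refine tendsto_atTop_mono (fun n => (hκn (φ n + 1)).le) ?_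
    have : Tendsto (fun n : ℕ => φ n + 1) atTop atTop :=
      (tendsto_add_atTop_nat 1).comp hφ.tendsto_atTop
    exact (tendsto_natCast_atTop_atTop).comp this
  have hinv : Tendsto (fun n => ‖G (xk (j n))‖⁻¹) atTop (𝓝 0) :=
    tendsto_inv_atTop_zero.comp hnorm_top
  have key : ∀ v : E, 0 ≤ ⟪g, x - v⟫ := by
    intro v
    have h1 : ∀ n, ‖G (xk (j n))‖⁻¹ * ⟪G v, xk (j n) - v⟫ ≤ ⟪y (φ n), xk (j n) - v⟫ := by
      intro n
      have hmono := mono (xk (j n)) v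
      rw [inner_sub_left] at hmono
      have h2 : ⟪G v, xk (j n) - v⟫ ≤ ⟪G (xk (j n)), xk (j n) - v⟫ := by linarith
      have h3 := mul_le_mul_of_nonneg_left h2 (inv_nonneg.2 (norm_nonneg (G (xk (j n)))))
      calc ‖G (xk (j n))‖⁻¹ * ⟪G v, xk (j n) - v⟫
          ≤ ‖G (xk (j n))‖⁻¹ * ⟪G (xk (j n)), xk (j n) - v⟫ := h3
        _ = ⟪y (φ n), xk (j n) - v⟫ := by
            rw [hydef]
            simp only [hjdef, real_inner_smul_left]
    have hL : Tendsto (fun n => ⟪y (φ n), xk (j n) - v⟫) atTop (𝓝 ⟪g, x - v⟫) :=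
      hglim.inner (hxj.sub tendsto_const_nhds)
    have hR : Tendsto (fun n => ‖G (xk (j n))‖⁻¹ * ⟪G v, xk (j n) - v⟫) atTop (𝓝 0) := by
      have := hinv.mul ((tendsto_const_nhds (x := G v)).inner (hxj.sub (tendsto_const_nhds (x := v))))
      simpa using this
    exact le_of_tendsto_of_tendsto' hR hL h1
  have hfin := key (x + g)
  have : x - (x + g) = -g := by abel
  rw [this, inner_neg_right] at hfin
  have hg2 : ⟪g, g⟫ = 1 := by
    rw [real_inner_self_eq_norm_sq, hgnorm]; norm_num
  linarith

lemma cont_of_mono [FiniteDimensional ℝ E] {G : E → E}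
    (mono : ∀ u w : E, 0 ≤ ⟪G u - G w, u - w⟫)
    (rad : ∀ u w : E, ContinuousOn (fun t : ℝ => ⟪G (u + t • w), w⟫) (Icc (0:ℝ) 1)) :
    Continuous G := by
  rw [continuous_iff_seqContinuous]
  intro xk x hx
  apply tendsto_of_subseq_tendsto
  intro ns hns
  have hxns : Tendsto (fun n => xk (ns n)) atTop (𝓝 x) := hx.comp hns
  obtain ⟨C, hC⟩ := bounded_of_mono mono hxns
  obtain ⟨g, _, φ, hφ, hglim⟩ := (isCompact_closedBall (0:E) C).tendsto_subseq
    (x := fun n => G (xk (ns n))) (fun n => by simpa using hC n)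
  refine ⟨φ, ?_⟩
  have hxns2 : Tendsto (fun n => xk (ns (φ n))) atTop (𝓝 x) := hxns.comp hφ.tendsto_atTop
  have hkey : ∀ v, 0 ≤ ⟪g - G v, x - v⟫ := by
    intro v
    have hn : ∀ n, 0 ≤ ⟪G (xk (ns (φ n))) - G v, xk (ns (φ n)) - v⟫ := fun n => mono _ _
    have hlim : Tendsto (fun n => ⟪G (xk (ns (φ n))) - G v, xk (ns (φ n)) - v⟫) atTop
        (𝓝 ⟪g - G v, x - v⟫) :=
      (hglim.sub tendsto_const_nhds).inner (hxns2.sub tendsto_const_nhds)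
    exact le_of_tendsto_of_tendsto' tendsto_const_nhds hlim hn
  have hgx : g = G x := minty rad hkey
  rw [hgx] at hglim
  exact hglim




variable {E : Type*} [NormedAddCommGroup E] [InnerProductSpace ℝ E]


lemma surj_of_smooth_mono [FiniteDimensional ℝ E] {G : E → E} {m : ℝ} (hm : 0 < m)
    (mono : ∀ u w : E, m * ‖u - w‖ ^ 2 ≤ ⟪G u - G w, u - w⟫)
    (hsmooth : ContDiff ℝ 1 G) : Function.Surjective G := by
  have hcont : Continuous G := hsmooth.continuous
  have hexp : ∀ u w : E, m * ‖u - w‖ ≤ ‖G u - G w‖ := by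
    intro u w
    rcases eq_or_ne u w with rfl | hne
    · simp
    · have h1 := mono u w
      have h2 : ⟪G u - G w, u - w⟫ ≤ ‖G u - G w‖ * ‖u - w‖ := real_inner_le_norm _ _
      have h3 : 0 < ‖u - w‖ := norm_pos_iff.mpr (sub_ne_zero.mpr hne)
      nlinarith
  have hderiv : ∀ x w : E, m * ‖w‖ ^ 2 ≤ ⟪w, fderiv ℝ G x w⟫ := by
    intro x w
    have hd : HasFDerivAt G (fderiv ℝ G x) x :=
      (hsmooth.differentiable one_ne_zero x).hasFDerivAt
    have h1 : HasDerivAt (fun t : ℝ => x + t • w) w 0 := by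
      simpa using ((hasDerivAt_id (0:ℝ)).smul_const w).const_add x
    have hcomp : HasDerivAt (fun t : ℝ => G (x + t • w)) (fderiv ℝ G x w) 0 := by
      have hd' : HasFDerivAt G (fderiv ℝ G x) (x + (0:ℝ) • w) := by simpa using hd
      exact hd'.comp_hasDerivAt (0:ℝ) h1
    have hψ : HasDerivAt (fun t : ℝ => ⟪w, G (x + t • w)⟫) ⟪w, fderiv ℝ G x w⟫ 0 := by
      have := (innerSL ℝ w).hasFDerivAt.comp_hasDerivAt (0:ℝ) hcomp
      exact this
    have hslope := hasDerivAt_iff_tendsto_slope.mp hψ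
    have hslope' : Tendsto (slope (fun t : ℝ => ⟪w, G (x + t • w)⟫) 0) (𝓝[>] (0:ℝ))
        (𝓝 ⟪w, fderiv ℝ G x w⟫) :=
      hslope.mono_left (nhdsWithin_mono _ (fun t ht => ne_of_gt ht))
    refine ge_of_tendsto hslope' ?_
    filter_upwards [self_mem_nhdsWithin] with t ht
    have h0 : (0:ℝ) < t := ht
    have h1 := mono (x + t • w) x
    have h2 : x + t • w - x = t • w := by abel
    rw [h2] at h1
    rw [inner_smul_right, norm_smul] at h1
    simp only [Real.norm_eq_abs, abs_of_pos h0] at h1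
    have h3 : ⟪w, G (x + t • w) - G x⟫ ≥ m * (t * ‖w‖ ^ 2) := by
      have := h1
      rw [real_inner_comm] at this
      nlinarith
    rw [slope_def_field]
    simp only [sub_zero, zero_smul, add_zero]
    rw [le_div_iff₀ h0]
    rw [inner_sub_right] at h3
    nlinarith
  -- derivative is a linear equivalence at each point
  have hbij : ∀ x : E, Function.Bijective (fderiv ℝ G x) := by
    intro x
    have hinj : Function.Injective (fderiv ℝ G x) := by
      intro w1 w2 hw
      have h0 : fderiv ℝ G x (w1 - w2) = 0 := by
        rw [map_sub, hw, sub_self]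
      have h1 := hderiv x (w1 - w2)
      rw [h0, inner_zero_right] at h1
      have h2 : ‖w1 - w2‖ ^ 2 ≤ 0 := by nlinarith
      have h3 : ‖w1 - w2‖ = 0 := by nlinarith [sq_nonneg ‖w1 - w2‖, norm_nonneg (w1 - w2)]
      exact sub_eq_zero.mp (norm_eq_zero.mp h3)
    exact ⟨hinj, (LinearMap.injective_iff_surjective
      (f := (fderiv ℝ G x).toLinearMap)).mp hinj⟩
  have hopen : IsOpen (Set.range G) := by
    rw [isOpen_iff_mem_nhds]
    rintro b ⟨x, rfl⟩
    set e : E ≃L[ℝ] E :=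
      LinearEquiv.toContinuousLinearEquiv
        (LinearEquiv.ofBijective (fderiv ℝ G x).toLinearMap (hbij x)) with he
    have hce : (e : E →L[ℝ] E) = fderiv ℝ G x := by
      ext w; rfl
    have hstrict : HasStrictFDerivAt G (e : E →L[ℝ] E) x := by
      rw [hce]
      exact (hsmooth.contDiffAt).hasStrictFDerivAt one_ne_zero
    have hmap := hstrict.map_nhds_eq_of_equiv
    rw [← hmap, Filter.mem_map]
    have : G ⁻¹' Set.range G = Set.univ := by
      ext z; simp [Set.mem_range]
    rw [this]
    exact Filter.univ_mem
  have hclosed : IsClosed (Set.range G) := by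
    apply IsSeqClosed.isClosed
    intro zk b hzk hzb
    choose xk hxk using hzk
    have hGxk : Tendsto (fun n => G (xk n)) atTop (𝓝 b) := by
      refine hzb.congr fun n => (hxk n).symm
    have hcauchy : CauchySeq xk := by
      rw [Metric.cauchySeq_iff]
      intro ε hε
      obtain ⟨N, hN⟩ := (Metric.cauchySeq_iff).mp hzb.cauchySeq (m * ε) (by positivity)
      refine ⟨N, fun p hp q hq => ?_⟩
      have h1 := hexp (xk p) (xk q)
      have h2 : ‖G (xk p) - G (xk q)‖ < m * ε := by
        rw [hxk p, hxk q, ← dist_eq_norm]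
        exact hN p hp q hq
      rw [dist_eq_norm]
      calc ‖xk p - xk q‖ = (m * ‖xk p - xk q‖) / m := by field_simp
        _ ≤ ‖G (xk p) - G (xk q)‖ / m := by gcongr
        _ < (m * ε) / m := by gcongr
        _ = ε := by field_simp
    obtain ⟨x, hx⟩ := cauchySeq_tendsto_of_complete hcauchy
    have : Tendsto (fun n => G (xk n)) atTop (𝓝 (G x)) := (hcont.tendsto x).comp hx
    exact ⟨x, tendsto_nhds_unique this hGxk⟩
  have hne : (Set.range G).Nonempty := ⟨G 0, 0, rfl⟩
  have huniv : Set.range G = Set.univ := IsClopen.eq_univ ⟨hclosed, hopen⟩ hne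
  exact Set.range_eq_univ.mp huniv




lemma exists_zero_findim {n : ℕ} {G : EuclideanSpace ℝ (Fin n) → EuclideanSpace ℝ (Fin n)}
    {m : ℝ} (hm : 0 < m)
    (mono : ∀ u w, m * ‖u - w‖ ^ 2 ≤ ⟪G u - G w, u - w⟫)
    (hcont : Continuous G)
    (surj : ∀ (H : EuclideanSpace ℝ (Fin n) → EuclideanSpace ℝ (Fin n)),
      (∀ u w, m * ‖u - w‖ ^ 2 ≤ ⟪H u - H w, u - w⟫) → ContDiff ℝ 1 H → Function.Surjective H)
    (mintyG : ∀ (x g : EuclideanSpace ℝ (Fin n)), (∀ v, 0 ≤ ⟪g - G v, x - v⟫) → g = G x) :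
    ∃ u, G u = 0 := by
  have hloc : LocallyIntegrable G volume := hcont.locallyIntegrable
  have hrk : ∀ k : ℕ, (0:ℝ) < 1 / (k+1) := by intro k; positivity
  let φ : ℕ → ContDiffBump (0 : EuclideanSpace ℝ (Fin n)) := fun k =>
    ⟨1 / (k+1) / 2, 1 / (k+1), by positivity, by have := hrk k; linarith⟩
  let Gk : ℕ → EuclideanSpace ℝ (Fin n) → EuclideanSpace ℝ (Fin n) :=
    fun k => ((φ k).normed volume) ⋆[lsmul ℝ ℝ, volume] G
  have hsmooth : ∀ k, ContDiff ℝ 1 (Gk k) := fun k =>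
    ((φ k).hasCompactSupport_normed).contDiff_convolution_left _ ((φ k).contDiff_normed) hloc
  have h_int : ∀ (k : ℕ) (x : EuclideanSpace ℝ (Fin n)),
      Integrable (fun t => (φ k).normed volume t • G (x - t)) volume := by
    intro k x
    apply Continuous.integrable_of_hasCompactSupport
    · exact ((φ k).contDiff_normed.continuous (n := 1)).smul
        (hcont.comp (continuous_const.sub continuous_id))
    · exact ((φ k).hasCompactSupport_normed).smul_right
  have hGk_def : ∀ (k : ℕ) (x : EuclideanSpace ℝ (Fin n)),
      Gk k x = ∫ t, (φ k).normed volume t • G (x - t) := by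
    intro k x
    simp only [Gk, convolution_def, lsmul_apply]
  have monoGk : ∀ (k : ℕ) (x y : EuclideanSpace ℝ (Fin n)),
      m * ‖x - y‖ ^ 2 ≤ ⟪Gk k x - Gk k y, x - y⟫ := by
    intro k x y
    have hsub : Gk k x - Gk k y = ∫ t, (φ k).normed volume t • (G (x - t) - G (y - t)) := by
      rw [hGk_def, hGk_def, ← integral_sub (h_int k x) (h_int k y)]
      congr 1; funext t; rw [smul_sub]
    have hInt2 : Integrable (fun t => (φ k).normed volume t • (G (x - t) - G (y - t))) volume := by
      have h := (h_int k x).sub (h_int k y)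
      refine h.congr ?_
      filter_upwards with t; simp [smul_sub]
    rw [hsub, real_inner_comm, ← integral_inner hInt2 (x - y)]
    have hpt : ∀ t, m * ‖x - y‖ ^ 2 * (φ k).normed volume t ≤
        ⟪x - y, (φ k).normed volume t • (G (x - t) - G (y - t))⟫ := by
      intro t
      rw [real_inner_smul_right]
      have h1 := mono (x - t) (y - t)
      have h2 : x - t - (y - t) = x - y := by abel
      rw [h2] at h1
      rw [real_inner_comm] at h1
      nlinarith [(φ k).nonneg_normed (μ := volume) t, mul_le_mul_of_nonneg_left h1 ((φ k).nonneg_normed (μ := volume) t)]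
    have hIntL : Integrable (fun t => m * ‖x - y‖ ^ 2 * (φ k).normed volume t) volume :=
      ((φ k).integrable_normed).const_mul _
    have hIntR : Integrable
        (fun t => ⟪x - y, (φ k).normed volume t • (G (x - t) - G (y - t))⟫) volume :=
      ((innerSL ℝ (x - y)).integrable_comp hInt2)
    have hmono := integral_mono hIntL hIntR hpt
    calc m * ‖x - y‖ ^ 2
        = ∫ t, m * ‖x - y‖ ^ 2 * (φ k).normed volume t := by
          rw [integral_const_mul, (φ k).integral_normed, mul_one]
      _ ≤ _ := hmono
  -- solve Gk k (u k) = 0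
  have hGkex : ∀ k, ∃ u, Gk k u = 0 := fun k => (surj (Gk k) (monoGk k) (hsmooth k)) 0
  choose u hu using hGkex
  -- Gk k x → G x for each x
  have hφrOut : Tendsto (fun k => (φ k).rOut) atTop (𝓝 0) := by
    simpa [φ, one_div] using (tendsto_one_div_add_atTop_nhds_zero_nat : Tendsto (fun n : ℕ => 1 / ((n:ℝ) + 1)) atTop (𝓝 0))
  have hGklim : ∀ x, Tendsto (fun k => Gk k x) atTop (𝓝 (G x)) := fun x =>
    ContDiffBump.convolution_tendsto_right_of_continuous hφrOut hcont x
  -- uniform bound on u k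
  have hbound : ∀ k, m * ‖u k‖ ≤ ‖Gk k 0‖ := by
    intro k
    rcases eq_or_ne (u k) 0 with h | h
    · simp [h]
    · have h1 := monoGk k (u k) 0
      rw [hu k, zero_sub, sub_zero] at h1
      have h2 : ⟪-Gk k 0, u k⟫ ≤ ‖Gk k 0‖ * ‖u k‖ := by
        have := real_inner_le_norm (-Gk k 0) (u k)
        rwa [norm_neg] at this
      have h3 : 0 < ‖u k‖ := norm_pos_iff.mpr h
      nlinarith
  obtain ⟨N, hN⟩ : ∃ N, ∀ k ≥ N, ‖Gk k 0‖ ≤ ‖G 0‖ + 1 := by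
    have := (hGklim 0).norm
    obtain ⟨N, hN⟩ := (Metric.tendsto_atTop.mp this) 1 one_pos
    exact ⟨N, fun k hk => by
      have := hN k hk
      rw [Real.dist_eq] at this
      have := abs_lt.mp this
      linarith [this.1, this.2]⟩
  set R := (‖G 0‖ + 1) / m with hR
  have hmemball : ∀ k, u (k + N) ∈ Metric.closedBall (0 : EuclideanSpace ℝ (Fin n)) R := by
    intro k
    have h1 := hbound (k + N)
    have h2 := hN (k + N) (Nat.le_add_left N k)
    simp only [Metric.mem_closedBall, dist_zero_right]
    rw [hR, le_div_iff₀ hm]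
    nlinarith
  obtain ⟨u0, _, ψ, hψ, hψlim⟩ := (isCompact_closedBall (0 : EuclideanSpace ℝ (Fin n)) R).tendsto_subseq hmemball
  set j : ℕ → ℕ := fun k => ψ k + N with hj
  have hjtop : Tendsto j atTop atTop :=
    (tendsto_add_atTop_nat N).comp hψ.tendsto_atTop
  have hulim : Tendsto (fun k => u (j k)) atTop (𝓝 u0) := hψlim
  have hkey : ∀ v, 0 ≤ ⟪(0 : EuclideanSpace ℝ (Fin n)) - G v, u0 - v⟫ := by
    intro v
    have hterm : ∀ k, 0 ≤ ⟪Gk (j k) v - (0 : EuclideanSpace ℝ (Fin n)), v - u (j k)⟫ := by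
      intro k
      have h1 := monoGk (j k) v (u (j k))
      rw [hu (j k)] at h1
      nlinarith [sq_nonneg ‖v - u (j k)‖, h1]
    have hGkv : Tendsto (fun k => Gk (j k) v) atTop (𝓝 (G v)) := (hGklim v).comp hjtop
    have hlim : Tendsto (fun k => ⟪Gk (j k) v - (0:EuclideanSpace ℝ (Fin n)), v - u (j k)⟫)
        atTop (𝓝 ⟪G v - 0, v - u0⟫) :=
      (hGkv.sub tendsto_const_nhds).inner (tendsto_const_nhds.sub hulim)
    have h0 : 0 ≤ ⟪G v - 0, v - u0⟫ := le_of_tendsto_of_tendsto' tendsto_const_nhds hlim hterm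
    have : ⟪(0:EuclideanSpace ℝ (Fin n)) - G v, u0 - v⟫ = ⟪G v - 0, v - u0⟫ := by
      rw [zero_sub, sub_zero]
      rw [inner_neg_left, ← inner_neg_right]
      congr 1; abel
    rw [this]; exact h0
  have := mintyG u0 0 hkey
  exact ⟨u0, this.symm⟩





lemma galerkin {X : Type*} [NormedAddCommGroup X] [NormedSpace ℝ X]
    (Fy : X → StrongDual ℝ X) {m : ℝ} (hm : 0 < m)
    (hmono : ∀ u w : X, m * ‖u - w‖ ^ 2 ≤ (Fy u - Fy w) (u - w))
    (hrad : ∀ u w : X, ContinuousOn (fun t : ℝ => Fy (u + t • w) w) (Icc (0:ℝ) 1))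
    (V : Submodule ℝ X) [FiniteDimensional ℝ V]
    (exzero : ∀ {n : ℕ} {G : EuclideanSpace ℝ (Fin n) → EuclideanSpace ℝ (Fin n)} {m' : ℝ},
      0 < m' → (∀ u w, m' * ‖u - w‖ ^ 2 ≤ ⟪G u - G w, u - w⟫) →
      (∀ u w, ContinuousOn (fun t : ℝ => ⟪G (u + t • w), w⟫) (Icc (0:ℝ) 1)) →
      ∃ u, G u = 0) :
    ∃ uV : V, ∀ z : V, Fy (uV : X) (z : X) = 0 := by
  classical
  set n := Module.finrank ℝ V with hn
  set b : Module.Basis (Fin n) ℝ V := Module.finBasis ℝ V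
  set le : EuclideanSpace ℝ (Fin n) ≃ₗ[ℝ] V :=
    (WithLp.linearEquiv 2 ℝ (Fin n → ℝ)).trans b.equivFun.symm with hle
  set e : EuclideanSpace ℝ (Fin n) ≃L[ℝ] V := le.toContinuousLinearEquiv with he
  set G : EuclideanSpace ℝ (Fin n) → EuclideanSpace ℝ (Fin n) :=
    fun x => (InnerProductSpace.toDual ℝ (EuclideanSpace ℝ (Fin n))).symm
      ((Fy ((e x : V) : X)).comp ((V.subtypeL).comp (e : EuclideanSpace ℝ (Fin n) →L[ℝ] V)))
    with hG
  have hGip : ∀ x z : EuclideanSpace ℝ (Fin n), ⟪G x, z⟫ = Fy ((e x : V) : X) ((e z : V) : X) := by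
    intro x z
    rw [hG]
    rw [InnerProductSpace.toDual_symm_apply]
    rfl
  -- constant
  set C : ℝ := max ‖(e.symm : V →L[ℝ] EuclideanSpace ℝ (Fin n))‖ 1 with hC
  have hC1 : (1:ℝ) ≤ C := le_max_right _ _
  have hC0 : 0 < C := lt_of_lt_of_le one_pos hC1
  have hCle : ∀ v : V, ‖e.symm v‖ ≤ C * ‖v‖ := by
    intro v
    calc ‖e.symm v‖ ≤ ‖(e.symm : V →L[ℝ] EuclideanSpace ℝ (Fin n))‖ * ‖v‖ :=
          (e.symm : V →L[ℝ] EuclideanSpace ℝ (Fin n)).le_opNorm v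
      _ ≤ C * ‖v‖ := by
          apply mul_le_mul_of_nonneg_right (le_max_left _ _) (norm_nonneg _)
  set m' : ℝ := m / C ^ 2 with hm'
  have hm'0 : 0 < m' := by positivity
  have monoG : ∀ x z : EuclideanSpace ℝ (Fin n), m' * ‖x - z‖ ^ 2 ≤ ⟪G x - G z, x - z⟫ := by
    intro x z
    have h1 : ⟪G x - G z, x - z⟫
        = (Fy ((e x : V) : X) - Fy ((e z : V) : X)) (((e x : V) : X) - ((e z : V) : X)) := by
      have hxz : ((e (x - z) : V) : X) = ((e x : V) : X) - ((e z : V) : X) := by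
        rw [map_sub]; simp
      rw [inner_sub_left, hGip, hGip, ContinuousLinearMap.sub_apply, hxz]
    rw [h1]
    have h2 := hmono ((e x : V) : X) ((e z : V) : X)
    have h3 : ‖x - z‖ ≤ C * ‖((e x : V) : X) - ((e z : V) : X)‖ := by
      have h4 : x - z = e.symm (e x - e z) := by
        rw [map_sub]; simp
      rw [h4]
      have h5 := hCle (e x - e z)
      have h6 : ‖((e x : V) : X) - ((e z : V) : X)‖ = ‖e x - e z‖ := by
        rw [← Submodule.coe_sub]; rfl
      rw [h6]; exact h5
    have h7 : m' * ‖x - z‖ ^ 2 ≤ m * ‖((e x : V) : X) - ((e z : V) : X)‖ ^ 2 := by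
      rw [hm']
      rw [div_mul_eq_mul_div, div_le_iff₀ (by positivity)]
      have h8 : ‖x - z‖ ^ 2 ≤ (C * ‖((e x : V) : X) - ((e z : V) : X)‖) ^ 2 := by
        apply sq_le_sq' _ h3
        nlinarith [norm_nonneg (x - z)]
      nlinarith [hm.le]
    linarith
  have radG : ∀ x w : EuclideanSpace ℝ (Fin n),
      ContinuousOn (fun t : ℝ => ⟪G (x + t • w), w⟫) (Icc (0:ℝ) 1) := by
    intro x w
    have h1 := hrad ((e x : V) : X) ((e w : V) : X)
    refine h1.congr ?_
    intro t _
    simp only [hGip]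
    congr 2
    rw [map_add, _root_.map_smul]
    simp
  obtain ⟨u0, hu0⟩ := exzero hm'0 monoG radG
  refine ⟨e u0, fun z => ?_⟩
  have h1 := hGip u0 (e.symm z)
  rw [hu0] at h1
  simp only [inner_zero_left] at h1
  rw [ContinuousLinearEquiv.apply_symm_apply] at h1
  exact h1.symm

end SMP

open Filter Topology Set

/-- Parametric strongly monotone principle. -/
theorem parametric_strongly_monotone
    {X : Type*} [NormedAddCommGroup X] [NormedSpace ℝ X] [CompleteSpace X]
    (hrefl : Function.Surjective (NormedSpace.inclusionInDoubleDual ℝ X))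
    {Y : Type*} [MetricSpace Y]
    (F : X → Y → StrongDual ℝ X)
    -- radial continuity of F(·,y)
    (hrad : ∀ (y : Y) (u w : X),
      ContinuousOn (fun t : ℝ => F (u + t • w) y w) (Set.Icc (0 : ℝ) 1))
    -- continuity of F(u,·)
    (hcont : ∀ u : X, Continuous fun y : Y => F u y)
    -- uniform strong monotonicity
    (m : ℝ) (hm : 0 < m)
    (hmono : ∀ (y : Y) (u w : X), (F u y - F w y) (u - w) ≥ m * ‖u - w‖ ^ 2) :
    (∀ y : Y, ∃! u : X, F u y = 0) ∧
    ∀ S : Y → X, (∀ y : Y, F (S y) y = 0) →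
      ∀ (yseq : ℕ → Y) (y : Y), Tendsto yseq atTop (𝓝 y) →
        Tendsto (fun n => S (yseq n)) atTop (𝓝 (S y)) := by
  have huniq : ∀ (y : Y) (u w : X), F u y = 0 → F w y = 0 → u = w := by
    intro y u w hu hw
    by_contra hne
    have h1 := hmono y u w
    rw [hu, hw] at h1
    simp only [sub_zero, ContinuousLinearMap.zero_apply, ge_iff_le] at h1
    have h3 : 0 < ‖u - w‖ := norm_pos_iff.mpr (sub_ne_zero.mpr hne)
    nlinarith [pow_pos h3 2, mul_pos hm (pow_pos h3 2)]
  have hex : ∀ y : Y, ∃ u : X, F u y = 0 := by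
    intro y
    -- the Minty trick in X
    have hradlim : ∀ u w : X,
        Tendsto (fun t : ℝ => F (u + t • w) y w) (𝓝[>] (0:ℝ)) (𝓝 (F u y w)) := by
      intro u w
      have h := (hrad y u w) 0 ⟨le_refl 0, zero_le_one⟩
      rw [ContinuousWithinAt] at h
      simp only [zero_smul, add_zero] at h
      have heq : 𝓝[Set.Ioc (0:ℝ) 1] (0:ℝ) = 𝓝[>] (0:ℝ) := nhdsWithin_Ioc_eq_nhdsGT one_pos
      refine h.mono_left ?_
      rw [← heq]
      exact nhdsWithin_mono _ Set.Ioc_subset_Icc_self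
    have hminty : ∀ u : X, (∀ v : X, 0 ≤ F v y (v - u)) → F u y = 0 := by
      intro u h
      have key : ∀ w : X, 0 ≤ F u y w := by
        intro w
        have hle : ∀ t ∈ Set.Ioc (0:ℝ) 1, 0 ≤ F (u + t • w) y w := by
          intro t ht
          have h1 := h (u + t • w)
          have h2 : u + t • w - u = t • w := by abel
          rw [h2, _root_.map_smul, smul_eq_mul] at h1
          nlinarith [ht.1]
        have hev : ∀ᶠ t in 𝓝[>] (0:ℝ), 0 ≤ F (u + t • w) y w := by
          filter_upwards [Ioc_mem_nhdsGT_of_mem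
            (⟨le_refl (0:ℝ), zero_lt_one⟩ : (0:ℝ) ∈ Set.Ico (0:ℝ) 1)] with t ht
          exact hle t ht
        exact ge_of_tendsto (hradlim u w) hev
      ext w
      have h1 := key w
      have h2 := key (-w)
      rw [map_neg] at h2
      simp only [ContinuousLinearMap.zero_apply]
      linarith
    -- Banach-Alaoglu and finite intersection property
    set R := ‖F 0 y‖ / m with hR
    set s : Set (WeakDual ℝ (StrongDual ℝ X)) :=
      WeakDual.toStrongDual ⁻¹'
        Metric.closedBall (0 : StrongDual ℝ (StrongDual ℝ X)) R with hs
    have hscompact : IsCompact s := WeakDual.isCompact_closedBall (0 : StrongDual ℝ (StrongDual ℝ X)) R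
    set Z : X → Set (WeakDual ℝ (StrongDual ℝ X)) :=
      fun v => {Φ | Φ (F v y) ≤ F v y v} with hZ
    have hZclosed : ∀ v, IsClosed (Z v) :=
      fun v => isClosed_le (WeakDual.eval_continuous (F v y)) continuous_const
    have hFIP : ∀ t : Finset X, (s ∩ ⋂ v ∈ t, Z v).Nonempty := by
      intro t
      set V := Submodule.span ℝ (t : Set X) with hV
      have : FiniteDimensional ℝ V := FiniteDimensional.span_of_finite ℝ t.finite_toSet
      obtain ⟨uV, huV⟩ := SMP.galerkin (fun u => F u y) hm (fun u w => hmono y u w)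
        (fun u w => hrad y u w) V
        (fun {n G m'} h1 h2 h3 => SMP.exists_zero_findim h1 h2
          (SMP.cont_of_mono (fun u w => le_trans (by nlinarith [sq_nonneg ‖u - w‖]) (h2 u w)) h3)
          (fun H hH hsm => SMP.surj_of_smooth_mono h1 hH hsm)
          (fun x g hg => SMP.minty h3 hg))
      have hb : m * ‖(uV : X)‖ ≤ ‖F 0 y‖ := by
        rcases eq_or_ne (uV : X) 0 with h | h
        · simp [h]
        · have h1 := hmono y (uV : X) 0
          have h2 : F (uV : X) y ((uV : X) - 0) = 0 := by
            rw [sub_zero]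
            exact huV uV
          rw [ContinuousLinearMap.sub_apply, h2] at h1
          have h3 : -(F 0 y ((uV : X) - 0)) ≤ ‖F 0 y‖ * ‖(uV : X)‖ := by
            calc -(F 0 y ((uV : X) - 0)) ≤ ‖F 0 y ((uV : X) - 0)‖ := by
                  rw [Real.norm_eq_abs]; exact neg_le_abs _
              _ ≤ ‖F 0 y‖ * ‖(uV : X) - 0‖ := (F 0 y).le_opNorm _
              _ = ‖F 0 y‖ * ‖(uV : X)‖ := by rw [sub_zero]
          have h4 : 0 < ‖(uV : X)‖ := norm_pos_iff.mpr h
          rw [sub_zero] at h1 h3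
          nlinarith
      refine ⟨WeakDual.toStrongDual.symm (NormedSpace.inclusionInDoubleDual ℝ X (uV : X)), ?_, ?_⟩
      · simp only [hs, Set.mem_preimage, Metric.mem_closedBall, dist_zero_right]
        calc dist (WeakDual.toStrongDual (WeakDual.toStrongDual.symm (NormedSpace.inclusionInDoubleDual ℝ X (uV : X)))) 0
            = ‖NormedSpace.inclusionInDoubleDual ℝ X (uV : X)‖ := by
              convert (dist_zero_right (NormedSpace.inclusionInDoubleDual ℝ X (uV : X))) using 2
              exact LinearEquiv.apply_symm_apply _ _
          _ ≤ ‖(uV : X)‖ := NormedSpace.double_dual_bound ℝ X _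
          _ ≤ R := by rw [hR, le_div_iff₀ hm]; linarith
      · rw [Set.mem_iInter₂]
        intro v hv
        simp only [hZ, Set.mem_setOf_eq]
        have hvV : v ∈ V := Submodule.subset_span hv
        have h1 := hmono y v (uV : X)
        have h2 : F (uV : X) y (v - (uV : X)) = 0 := by
          have h3 : F (uV : X) y ((⟨v, hvV⟩ : V) : X) = 0 := huV ⟨v, hvV⟩
          have h4 : F (uV : X) y ((uV : X)) = 0 := huV uV
          rw [map_sub, h3, h4, sub_zero]
        rw [ContinuousLinearMap.sub_apply, h2, sub_zero] at h1
        have h5 : 0 ≤ F v y (v - (uV : X)) := le_trans (by nlinarith [sq_nonneg ‖v - (uV : X)‖]) h1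
        have h6 : (WeakDual.toStrongDual.symm (NormedSpace.inclusionInDoubleDual ℝ X (uV : X))) (F v y) = F v y (uV : X) :=
          NormedSpace.dual_def ℝ X _ _
        rw [map_sub] at h5
        rw [h6]  -- may need adjustment for WeakDual coercion
        linarith
    have hne : (s ∩ ⋂ v : X, Z v).Nonempty := by
      by_contra hemp
      rw [Set.not_nonempty_iff_eq_empty] at hemp
      obtain ⟨t, ht⟩ := hscompact.elim_finite_subfamily_closed Z hZclosed hemp
      rw [← Set.not_nonempty_iff_eq_empty] at ht
      exact ht (hFIP t)
    obtain ⟨Φ, hΦs, hΦZ⟩ := hne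
    obtain ⟨u, hu⟩ := hrefl (WeakDual.toStrongDual Φ)
    refine ⟨u, hminty u ?_⟩
    intro v
    have h1 : Φ (F v y) ≤ F v y v := Set.mem_iInter.mp hΦZ v
    have h2 : (NormedSpace.inclusionInDoubleDual ℝ X u) (F v y) = F v y u :=
      NormedSpace.dual_def ℝ X _ _
    rw [hu] at h2
    have h3 : (WeakDual.toStrongDual Φ) (F v y) = Φ (F v y) := rfl
    rw [h3] at h2
    rw [map_sub]
    linarith [h2 ▸ h1]
  refine ⟨fun y => ?_, fun S hS yseq y hyy => ?_⟩
  · obtain ⟨u, hu⟩ := hex y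
    exact ⟨u, hu, fun w hw => huniq y w u hw hu⟩
  · have hb : ∀ n, m * ‖S (yseq n) - S y‖ ≤ ‖F (S y) (yseq n)‖ := by
      intro n
      rcases eq_or_ne (S (yseq n)) (S y) with h | h
      · simp [h]
      · have h1 := hmono (yseq n) (S (yseq n)) (S y)
        rw [hS (yseq n)] at h1
        rw [ContinuousLinearMap.sub_apply, ContinuousLinearMap.zero_apply, zero_sub] at h1
        have h2 : -(F (S y) (yseq n) (S (yseq n) - S y)) ≤
            ‖F (S y) (yseq n)‖ * ‖S (yseq n) - S y‖ := by
          calc -(F (S y) (yseq n) (S (yseq n) - S y))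
              ≤ ‖F (S y) (yseq n) (S (yseq n) - S y)‖ := by
                rw [Real.norm_eq_abs]; exact neg_le_abs _
            _ ≤ ‖F (S y) (yseq n)‖ * ‖S (yseq n) - S y‖ := (F (S y) (yseq n)).le_opNorm _
        have h3 : 0 < ‖S (yseq n) - S y‖ := norm_pos_iff.mpr (sub_ne_zero.mpr h)
        nlinarith
    have h4 : Tendsto (fun n => ‖F (S y) (yseq n)‖) atTop (𝓝 0) := by
      have h5 : Tendsto (fun n => F (S y) (yseq n)) atTop (𝓝 (F (S y) y)) :=
        ((hcont (S y)).tendsto y).comp hyy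
      rw [hS y] at h5
      simpa using h5.norm
    have h6 : Tendsto (fun n => ‖S (yseq n) - S y‖) atTop (𝓝 0) := by
      have h7 : Tendsto (fun n => ‖F (S y) (yseq n)‖ / m) atTop (𝓝 0) := by
        simpa using h4.div_const m
      refine squeeze_zero (fun n => norm_nonneg _) (fun n => ?_) h7
      rw [le_div_iff₀ hm]
      linarith [hb n]
    exact tendsto_iff_norm_sub_tendsto_zero.mpr h6
end

section
/- Let H be a real Hilbert space and A : H → H a radially continuous one-sided contraction with constant m < 1 (i.e., ⟨A(u) − A(w), u − w⟩ ≤ m‖u − w‖²). Then I − A : H → H is a bijection with a continuous inverse. -/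
open scoped RealInnerProductSpace
open Filter Function FiniteDimensional

/-- 1-D strongly monotone continuous maps are bijective. -/
lemma oneDim_bij (g : ℝ → ℝ) (c : ℝ) (hc : 0 < c) (hg : Continuous g)
    (hmono : ∀ s t : ℝ, c * (t - s) ^ 2 ≤ (g t - g s) * (t - s)) (y : ℝ) :
    ∃! t, g t = y := by
  have key : ∀ s t : ℝ, s ≤ t → g s + c * (t - s) ≤ g t := by
    intro s t hst
    rcases eq_or_lt_of_le hst with rfl | h
    · simp
    · have := hmono s t
      nlinarith
  have hdiv : c * ((y - g 0) / c) = y - g 0 := by field_simp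
  obtain ⟨a, b, hab, hga, hgb⟩ : ∃ a b : ℝ, a ≤ b ∧ g a ≤ y ∧ y ≤ g b := by
    refine ⟨min 0 ((y - g 0) / c), max 0 ((y - g 0) / c),
      le_trans (min_le_left _ _) (le_max_left _ _), ?_, ?_⟩
    · have h1 := key (min 0 ((y - g 0) / c)) 0 (min_le_left _ _)
      have h2 : c * (min 0 ((y - g 0) / c)) ≤ c * ((y - g 0)/c) :=
        mul_le_mul_of_nonneg_left (min_le_right _ _) hc.le
      nlinarith
    · have h1 := key 0 (max 0 ((y - g 0) / c)) (le_max_left _ _)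
      have h2 : c * ((y - g 0)/c) ≤ c * (max 0 ((y - g 0) / c)) :=
        mul_le_mul_of_nonneg_left (le_max_right _ _) hc.le
      nlinarith
  obtain ⟨t, -, ht⟩ := intermediate_value_Icc hab hg.continuousOn ⟨hga, hgb⟩
  refine ⟨t, ht, ?_⟩
  intro s hs
  have h1 := hmono s t
  rw [ht, hs] at h1
  have h2 : (t - s) ^ 2 = 0 := le_antisymm (by nlinarith) (sq_nonneg _)
  have := sub_eq_zero.mp (sq_eq_zero_iff.mp h2)
  linarith

/-- Minty's lemma: for a monotone, radially continuous operator, weak solutions are strong. -/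
lemma minty_lemma {E : Type*} [NormedAddCommGroup E] [InnerProductSpace ℝ E]
    (S : E → E) (mono : ∀ u w : E, 0 ≤ ⟪S u - S w, u - w⟫)
    (rad : ∀ u v : E, ContinuousOn (fun t : ℝ => ⟪S (u + t • v), v⟫) (Set.Icc (0:ℝ) 1))
    (u b : E) (h : ∀ w : E, 0 ≤ ⟪b - S w, u - w⟫) : b = S u := by
  have hkey : ∀ v : E, ⟪b - S u, v⟫ ≤ 0 := by
    intro v
    -- for t ∈ (0,1], ⟪b, v⟫ ≤ ⟪S (u + t • v), v⟫
    have hineq : ∀ t : ℝ, 0 < t → t ≤ 1 → ⟪b, v⟫ ≤ ⟪S (u + t • v), v⟫ := by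
      intro t ht ht1
      have := h (u + t • v)
      have hsimp : u - (u + t • v) = (-t) • v := by
        rw [neg_smul]; abel
      rw [hsimp, real_inner_smul_right, inner_sub_left] at this
      have : 0 ≤ -t * (⟪b, v⟫ - ⟪S (u + t • v), v⟫) := this
      nlinarith
    -- take the limit t → 0⁺ along t_n = 1/(n+1)
    have hc0 : ContinuousWithinAt (fun t : ℝ => ⟪S (u + t • v), v⟫) (Set.Icc 0 1) 0 :=
      (rad u v) 0 ⟨le_refl 0, zero_le_one⟩
    have hseq : Tendsto (fun n : ℕ => (1:ℝ) / (n + 1)) atTop (nhdsWithin 0 (Set.Icc 0 1)) := by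
      rw [tendsto_nhdsWithin_iff]
      refine ⟨tendsto_one_div_add_atTop_nhds_zero_nat, Filter.Eventually.of_forall fun n => ?_⟩
      constructor
      · positivity
      · rw [div_le_one (by positivity)]
        linarith [Nat.cast_nonneg (α := ℝ) n]
    have hlim : Tendsto (fun n : ℕ => ⟪S (u + ((1:ℝ)/(n+1)) • v), v⟫) atTop
        (nhds ⟪S (u + (0:ℝ) • v), v⟫) := (hc0.tendsto).comp hseq
    have hle : ⟪b, v⟫ ≤ ⟪S (u + (0:ℝ) • v), v⟫ := by
      refine ge_of_tendsto hlim (Filter.Eventually.of_forall fun n => ?_)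
      have hpos : (0:ℝ) < (1:ℝ) / (n + 1) := by positivity
      refine hineq _ hpos ?_
      rw [div_le_one (by positivity)]
      linarith [Nat.cast_nonneg (α := ℝ) n]
    rw [zero_smul, add_zero] at hle
    rw [inner_sub_left]; linarith
  have h2 := hkey (b - S u)
  rw [real_inner_self_eq_norm_sq] at h2
  have : ‖b - S u‖ = 0 := by nlinarith [norm_nonneg (b - S u)]
  have := norm_eq_zero.mp this
  rw [sub_eq_zero] at this
  exact this

/-- A monotone, radially continuous operator on a finite-dimensional real
inner product space is continuous. -/
lemma mono_rad_continuous {E : Type*} [NormedAddCommGroup E] [InnerProductSpace ℝ E]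
    [FiniteDimensional ℝ E]
    (S : E → E) (mono : ∀ u w : E, 0 ≤ ⟪S u - S w, u - w⟫)
    (rad : ∀ u v : E, ContinuousOn (fun t : ℝ => ⟪S (u + t • v), v⟫) (Set.Icc (0:ℝ) 1)) :
    Continuous S := by
  rcases subsingleton_or_nontrivial E with hE | hE
  · have : S = fun _ => S 0 := funext fun x => congrArg S (Subsingleton.elim x 0)
    rw [this]; exact continuous_const
  obtain ⟨v0, hv0⟩ : ∃ v : E, v ≠ 0 := exists_ne 0
  set e₀ : E := ‖v0‖⁻¹ • v0 with he₀
  have he₀1 : ‖e₀‖ = 1 := norm_smul_inv_norm hv0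
  rw [continuous_iff_continuousAt]
  intro u
  rw [ContinuousAt]
  apply tendsto_of_subseq_tendsto
  intro y hy
  -- y : ℕ → E tends to u; find subsequence along which S ∘ y → S u
  -- Step 1: a subsequence with bounded image under S
  have hbdd : ∃ B : ℝ, ∃ᶠ n in atTop, ‖S (y n)‖ ≤ B := by
    by_contra hcon
    push_neg at hcon
    have hT : Tendsto (fun n => ‖S (y n)‖) atTop atTop := by
      rw [tendsto_atTop]
      intro B
      have := (hcon B)
      filter_upwards [this] with n hn
      exact hn.le
    -- construct unit vectors
    set v : ℕ → E := fun n => if 1 ≤ ‖S (y n)‖ then ‖S (y n)‖⁻¹ • S (y n) else e₀ with hv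
    have hvmem : ∀ n, v n ∈ Metric.sphere (0 : E) 1 := by
      intro n
      rw [mem_sphere_iff_norm, sub_zero, hv]
      dsimp only
      split_ifs with h
      · exact norm_smul_inv_norm (by intro h0; rw [h0, norm_zero] at h; linarith)
      · exact he₀1
    obtain ⟨vl, hvl, φ, hφ, hφt⟩ := (isCompact_sphere (0:E) 1).tendsto_subseq hvmem
    have hvl1 : ‖vl‖ = 1 := by rwa [mem_sphere_iff_norm, sub_zero] at hvl
    have hkey : ∀ w : E, 0 ≤ ⟪vl, u - w⟫ := by
      intro w
      have hev : ∀ᶠ n in atTop, (1:ℝ) ≤ ‖S (y n)‖ := hT.eventually_ge_atTop 1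
      have hineq : ∀ᶠ n in atTop,
          ‖S (y n)‖⁻¹ * ⟪S w, y n - w⟫ ≤ ⟪v n, y n - w⟫ := by
        filter_upwards [hev] with n hn
        have hpos : (0:ℝ) < ‖S (y n)‖ := lt_of_lt_of_le one_pos hn
        have h1 := mono (y n) w
        rw [inner_sub_left] at h1
        have : v n = ‖S (y n)‖⁻¹ • S (y n) := by rw [hv]; dsimp only; rw [if_pos hn]
        rw [this, real_inner_smul_left]
        have := mul_le_mul_of_nonneg_left (by linarith : ⟪S w, y n - w⟫ ≤ ⟪S (y n), y n - w⟫)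
          (inv_nonneg.mpr hpos.le)
        exact this
      -- pass to the limit along φ
      have hyu : Tendsto (fun k => y (φ k)) atTop (nhds u) := hy.comp hφ.tendsto_atTop
      have hlhs : Tendsto (fun k => ⟪v (φ k), y (φ k) - w⟫) atTop (nhds ⟪vl, u - w⟫) :=
        hφt.inner (hyu.sub tendsto_const_nhds)
      have hinv : Tendsto (fun k => ‖S (y (φ k))‖⁻¹) atTop (nhds 0) :=
        tendsto_inv_atTop_zero.comp (hT.comp hφ.tendsto_atTop)
      have hrhs : Tendsto (fun k => ‖S (y (φ k))‖⁻¹ * ⟪S w, y (φ k) - w⟫) atTop (nhds 0) := by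
        have h2 : Tendsto (fun k => ⟪S w, y (φ k) - w⟫) atTop (nhds ⟪S w, u - w⟫) :=
          tendsto_const_nhds.inner (hyu.sub tendsto_const_nhds)
        have := hinv.mul h2
        rwa [zero_mul] at this
      refine le_of_tendsto_of_tendsto hrhs hlhs ?_
      rw [Filter.EventuallyLE]
      exact (hφ.tendsto_atTop.eventually hineq)
    have hfin := hkey (u + vl)
    have hsub : u - (u + vl) = -vl := by abel
    rw [hsub, inner_neg_right, real_inner_self_eq_norm_sq, hvl1] at hfin
    norm_num at hfin
  -- Step 2: extract a convergent subsequence of S ∘ y and identify the limit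
  obtain ⟨B, hB⟩ := hbdd
  obtain ⟨ψ, hψ, hψB⟩ := Filter.extraction_of_frequently_atTop hB
  have hz : Tendsto (fun k => y (ψ k)) atTop (nhds u) := hy.comp hψ.tendsto_atTop
  have hmem : ∀ k, S (y (ψ k)) ∈ Metric.closedBall (0:E) B := by
    intro k
    rw [Metric.mem_closedBall, dist_zero_right]
    exact hψB k
  obtain ⟨b, -, σ, hσ, hσt⟩ := (isCompact_closedBall (0:E) B).tendsto_subseq hmem
  have hzz : Tendsto (fun k => y (ψ (σ k))) atTop (nhds u) := hz.comp hσ.tendsto_atTop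
  have hb : b = S u := by
    refine minty_lemma S mono rad u b fun w => ?_
    have hlim : Tendsto (fun k => ⟪S (y (ψ (σ k))) - S w, y (ψ (σ k)) - w⟫) atTop
        (nhds ⟪b - S w, u - w⟫) :=
      (hσt.sub tendsto_const_nhds).inner (hzz.sub tendsto_const_nhds)
    exact ge_of_tendsto hlim (Filter.Eventually.of_forall fun k => mono _ _)
  exact ⟨ψ ∘ σ, by rw [← hb]; exact hσt⟩

universe u

lemma proj_inner {E : Type u} [NormedAddCommGroup E] [InnerProductSpace ℝ E]
    (K : Submodule ℝ E) [K.HasOrthogonalProjection] (z : E) (x : K) :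
    ⟪(K.orthogonalProjectionOnto z : K), x⟫ = ⟪z, (x : E)⟫ := by
  rw [Submodule.coe_inner]
  have h1 : z - (K.orthogonalProjectionOnto z : E) ∈ Kᗮ :=
    Submodule.sub_starProjection_mem_orthogonal z
  have h2 : ⟪z - (K.orthogonalProjectionOnto z : E), (x : E)⟫ = 0 :=
    Submodule.inner_left_of_mem_orthogonal x.2 h1
  rw [inner_sub_left] at h2
  linarith

lemma fd_surjective : ∀ (n : ℕ) (E : Type u) [NormedAddCommGroup E]
    [InnerProductSpace ℝ E] [FiniteDimensional ℝ E], Module.finrank ℝ E = n →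
    ∀ (S : E → E) (c : ℝ), 0 < c → Continuous S →
    (∀ u w : E, c * ‖u - w‖ ^ 2 ≤ ⟪S u - S w, u - w⟫) → Surjective S := by
  intro n
  induction n with
  | zero =>
    intro E _ _ _ hrank S c hc hS hmono f
    have : Subsingleton E := Module.finrank_zero_iff.mp hrank
    exact ⟨f, Subsingleton.elim _ _⟩
  | succ n ih =>
    intro E _ _ _ hrank S c hc hS hmono f
    have hnt : Nontrivial E := by
      apply Module.nontrivial_of_finrank_pos (R := ℝ)
      omega
    obtain ⟨v0, hv0⟩ : ∃ v : E, v ≠ 0 := exists_ne 0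
    set e : E := ‖v0‖⁻¹ • v0 with he_def
    have he : ‖e‖ = 1 := norm_smul_inv_norm hv0
    have hene : e ≠ 0 := by
      intro h; rw [h, norm_zero] at he; norm_num at he
    set K : Submodule ℝ E := (ℝ ∙ e)ᗮ with hK_def
    have hrankK : Module.finrank ℝ K = n := by
      have h1 := Submodule.finrank_add_finrank_orthogonal (K := ((ℝ ∙ e) : Submodule ℝ E))
      have h2 : Module.finrank ℝ (ℝ ∙ e : Submodule ℝ E) = 1 := finrank_span_singleton hene
      rw [h2, hrank] at h1
      rw [hK_def]
      omega
    have heK : ∀ x : K, ⟪(x : E), e⟫ = 0 := fun x =>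
      Submodule.inner_left_of_mem_orthogonal (Submodule.mem_span_singleton_self e) x.2
    -- the map along the direction e
    set p : K → ℝ → E := fun x t => (x : E) + t • e with hp_def
    set g : K → ℝ → ℝ := fun x t => ⟪S (p x t), e⟫ with hg_def
    have hpdiff : ∀ (x y : K) (s t : ℝ), p x t - p y s = ((x - y : K) : E) + (t - s) • e := by
      intro x y s t
      simp only [hp_def, Submodule.coe_sub, sub_smul]
      abel
    have hpnorm : ∀ (x y : K) (s t : ℝ),
        ‖p x t - p y s‖ ^ 2 = ‖x - y‖ ^ 2 + (t - s) ^ 2 := by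
      intro x y s t
      rw [hpdiff, norm_add_sq_real]
      have h1 : ⟪((x - y : K) : E), (t - s) • e⟫ = 0 := by
        rw [real_inner_smul_right, heK (x - y), mul_zero]
      rw [h1, norm_smul, Real.norm_eq_abs, he, mul_one, sq_abs]
      have h2 : ‖((x - y : K) : E)‖ = ‖x - y‖ := rfl
      rw [h2]
      ring
    have gmono : ∀ (x : K) (s t : ℝ), c * (t - s) ^ 2 ≤ (g x t - g x s) * (t - s) := by
      intro x s t
      have h0 := hmono (p x t) (p x s)
      have hd : p x t - p x s = (t - s) • e := by
        rw [hpdiff, sub_self, Submodule.coe_zero, zero_add]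
      rw [hd, real_inner_smul_right, norm_smul, Real.norm_eq_abs, he, mul_one, sq_abs] at h0
      have : g x t - g x s = ⟪S (p x t) - S (p x s), e⟫ := by
        rw [hg_def, inner_sub_left]
      rw [this]
      rw [mul_comm (t - s)] at h0
      exact h0
    have gcont : ∀ x : K, Continuous (g x) := by
      intro x
      apply Continuous.inner _ continuous_const
      exact hS.comp (continuous_const.add (continuous_id.smul continuous_const))
    have hτ : ∀ x : K, ∃! t, g x t = ⟪f, e⟫ := fun x =>
      oneDim_bij (g x) c hc (gcont x) (gmono x) _
    choose τ hτ1 hτ2 using hτ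
    -- continuity of τ
    have habs : ∀ x y : K, c * |τ x - τ y| ≤ |g x (τ y) - g y (τ y)| := by
      intro x y
      rcases eq_or_ne (τ x) (τ y) with h | h
      · rw [h, sub_self, abs_zero, mul_zero]
        exact abs_nonneg _
      have h1 := gmono x (τ y) (τ x)
      rw [hτ1 x] at h1
      have h2 : (⟪f, e⟫ - g x (τ y)) * (τ x - τ y)
          ≤ |g x (τ y) - g y (τ y)| * |τ x - τ y| := by
        rw [← abs_mul]
        have : (⟪f, e⟫ - g x (τ y)) * (τ x - τ y)
            = -((g x (τ y) - g y (τ y)) * (τ x - τ y)) := by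
          rw [← hτ1 y]; ring
        rw [this]
        exact neg_le_abs _
      have h3 : c * |τ x - τ y| * |τ x - τ y| ≤ |g x (τ y) - g y (τ y)| * |τ x - τ y| := by
        calc c * |τ x - τ y| * |τ x - τ y| = c * (τ x - τ y) ^ 2 := by
              rw [mul_assoc, abs_mul_abs_self, ← sq]
          _ ≤ (⟪f, e⟫ - g x (τ y)) * (τ x - τ y) := h1
          _ ≤ _ := h2
      have h4 : 0 < |τ x - τ y| := abs_pos.mpr (sub_ne_zero.mpr h)
      exact le_of_mul_le_mul_right h3 h4
    have hτcont : Continuous τ := by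
      apply SeqContinuous.continuous
      intro x x0 hx
      rw [tendsto_iff_dist_tendsto_zero]
      have hbound : ∀ n, dist (τ (x n)) (τ x0) ≤ c⁻¹ * |g (x n) (τ x0) - g x0 (τ x0)| := by
        intro n
        rw [Real.dist_eq]
        have := habs (x n) x0
        rw [← le_div_iff₀' hc] at this
        rw [div_eq_inv_mul] at this
        exact this
      have hg0 : Tendsto (fun n => c⁻¹ * |g (x n) (τ x0) - g x0 (τ x0)|) atTop (nhds 0) := by
        have hcontx : Continuous (fun z : K => g z (τ x0)) := by
          apply Continuous.inner _ continuous_const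
          exact hS.comp ((continuous_subtype_val).add continuous_const)
        have h5 : Tendsto (fun n => g (x n) (τ x0)) atTop (nhds (g x0 (τ x0))) :=
          (hcontx.tendsto x0).comp hx
        have h6 : Tendsto (fun n => g (x n) (τ x0) - g x0 (τ x0)) atTop (nhds 0) := by
          have := h5.sub (tendsto_const_nhds (x := g x0 (τ x0)))
          rwa [sub_self] at this
        have h7 := h6.abs
        rw [abs_zero] at h7
        have := h7.const_mul c⁻¹
        rwa [mul_zero] at this
      exact squeeze_zero (fun n => dist_nonneg) hbound hg0
    -- the reduced operator on K
    set S' : K → K := fun x => K.orthogonalProjectionOnto (S (p x (τ x))) with hS'_def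
    have hS'cont : Continuous S' := by
      apply K.orthogonalProjectionOnto.continuous.comp
      apply hS.comp
      exact (continuous_subtype_val).add (hτcont.smul continuous_const)
    have hge : ∀ x y : K, ⟪S (p x (τ x)) - S (p y (τ y)), e⟫ = 0 := by
      intro x y
      rw [inner_sub_left]
      have h1 : ⟪S (p x (τ x)), e⟫ = ⟪f, e⟫ := hτ1 x
      have h2 : ⟪S (p y (τ y)), e⟫ = ⟪f, e⟫ := hτ1 y
      rw [h1, h2, sub_self]
    have hS'mono : ∀ x y : K, c * ‖x - y‖ ^ 2 ≤ ⟪S' x - S' y, x - y⟫ := by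
      intro x y
      have h1 : S' x - S' y = K.orthogonalProjectionOnto (S (p x (τ x)) - S (p y (τ y))) := by
        rw [hS'_def]; dsimp only; rw [map_sub]
      rw [h1, proj_inner]
      have h2 : ⟪S (p x (τ x)) - S (p y (τ y)), ((x - y : K) : E)⟫
          = ⟪S (p x (τ x)) - S (p y (τ y)), p x (τ x) - p y (τ y)⟫ := by
        rw [hpdiff x y (τ y) (τ x), inner_add_right, real_inner_smul_right, hge, mul_zero,
          add_zero]
      rw [h2]
      calc c * ‖x - y‖ ^ 2 ≤ c * ‖p x (τ x) - p y (τ y)‖ ^ 2 := by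
            apply mul_le_mul_of_nonneg_left _ hc.le
            rw [hpnorm]
            nlinarith [sq_nonneg (τ x - τ y)]
        _ ≤ _ := hmono _ _
    obtain ⟨x0, hx0⟩ := ih K hrankK S' c hc hS'cont hS'mono (K.orthogonalProjectionOnto f)
    refine ⟨p x0 (τ x0), ?_⟩
    set z : E := S (p x0 (τ x0)) - f with hz_def
    have hz1 : ⟪z, e⟫ = 0 := by
      have h := hτ1 x0
      simp only [hg_def] at h
      rw [hz_def, inner_sub_left, h, sub_self]
    have hz2 : K.orthogonalProjectionOnto z = 0 := by
      rw [hz_def, map_sub]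
      rw [hS'_def] at hx0
      dsimp only at hx0
      rw [hx0, sub_self]
    have hz3 : z ∈ Kᗮ := by
      have : z - (K.orthogonalProjectionOnto z : E) ∈ Kᗮ := Submodule.sub_starProjection_mem_orthogonal (K := K) z
      rwa [hz2, Submodule.coe_zero, sub_zero] at this
    have hz4 : z ∈ (ℝ ∙ e : Submodule ℝ E) := by
      rw [hK_def] at hz3
      rwa [Submodule.orthogonal_orthogonal] at hz3
    obtain ⟨a, ha⟩ := Submodule.mem_span_singleton.mp hz4
    have : a = 0 := by
      have := hz1
      rw [← ha, real_inner_smul_left, real_inner_self_eq_norm_sq, he] at this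
      simpa using this
    have hz0 : z = 0 := by rw [← ha, this, zero_smul]
    rw [hz_def] at hz0
    exact sub_eq_zero.mp hz0

lemma galerkin {H : Type*} [NormedAddCommGroup H] [InnerProductSpace ℝ H]
    (S : H → H) (c : ℝ) (hc : 0 < c)
    (rad : ∀ u v : H, ContinuousOn (fun t : ℝ => ⟪S (u + t • v), v⟫) (Set.Icc (0:ℝ) 1))
    (hmono : ∀ u w : H, c * ‖u - w‖ ^ 2 ≤ ⟪S u - S w, u - w⟫) (f : H) (s : Finset H) :
    ∃ u : H, c * ‖u‖ ≤ ‖f‖ + ‖S 0‖ ∧ ∀ w ∈ s, 0 ≤ ⟪S w - f, w - u⟫ := by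
  set F : Submodule ℝ H := Submodule.span ℝ (s : Set H) with hF_def
  haveI : FiniteDimensional ℝ F := FiniteDimensional.span_of_finite ℝ s.finite_toSet
  set SF : F → F := fun x => F.orthogonalProjectionOnto (S x) with hSF_def
  have hSFsub : ∀ x y : F, SF x - SF y = F.orthogonalProjectionOnto (S x - S y) := by
    intro x y; rw [hSF_def]; dsimp only; rw [map_sub]
  have hSFmono : ∀ x y : F, c * ‖x - y‖ ^ 2 ≤ ⟪SF x - SF y, x - y⟫ := by
    intro x y
    rw [hSFsub, proj_inner]
    have h1 : ((x - y : F) : H) = (x : H) - (y : H) := by push_cast; ring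
    rw [h1]
    have h2 : ‖x - y‖ = ‖(x : H) - (y : H)‖ := by rw [← h1]; rfl
    rw [h2]
    exact hmono _ _
  have hSFrad : ∀ u v : F,
      ContinuousOn (fun t : ℝ => ⟪SF (u + t • v), v⟫) (Set.Icc (0:ℝ) 1) := by
    intro u v
    have h1 : ∀ t : ℝ, ⟪SF (u + t • v), v⟫ = ⟪S ((u : H) + t • (v : H)), (v : H)⟫ := by
      intro t
      rw [hSF_def]
      dsimp only
      rw [proj_inner]
      have hcast : ((u + t • v : F) : H) = (u : H) + t • (v : H) := by
        push_cast; ring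
      rw [hcast]
    simp only [h1]
    exact rad (u : H) (v : H)
  have hSFcont : Continuous SF :=
    mono_rad_continuous SF
      (fun u w => le_trans (by positivity) (hSFmono u w)) hSFrad
  obtain ⟨x, hx⟩ := fd_surjective (Module.finrank ℝ F) F rfl SF c hc hSFcont hSFmono
    (F.orthogonalProjectionOnto f)
  refine ⟨(x : H), ?_, ?_⟩
  · -- norm bound
    have h1 : ⟪S (x : H), (x : H)⟫ = ⟪f, (x : H)⟫ := by
      rw [← proj_inner F (S (x : H)) x, ← proj_inner F f x]
      have hrfl : F.orthogonalProjectionOnto (S (x : H)) = SF x := rfl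
      rw [hrfl, hx]
    have h2 := hmono (x : H) 0
    rw [sub_zero, inner_sub_left, h1] at h2
    have h3 : ⟪f, (x : H)⟫ ≤ ‖f‖ * ‖(x : H)‖ := real_inner_le_norm _ _
    have h4 : -⟪S 0, (x : H)⟫ ≤ ‖S 0‖ * ‖(x : H)‖ := by
      have := abs_real_inner_le_norm (S 0) (x : H)
      have := neg_le_abs ⟪S 0, (x : H)⟫
      linarith
    have h5 : c * ‖(x : H)‖ ^ 2 ≤ (‖f‖ + ‖S 0‖) * ‖(x : H)‖ := by nlinarith
    rcases eq_or_lt_of_le (norm_nonneg (x : H)) with h6 | h6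
    · rw [← h6, mul_zero]
      positivity
    · have := le_of_mul_le_mul_right (by nlinarith : c * ‖(x : H)‖ * ‖(x : H)‖ ≤ (‖f‖ + ‖S 0‖) * ‖(x : H)‖) h6
      exact this
  · intro w hw
    have hwF : w ∈ F := Submodule.subset_span hw
    have horth : S (x : H) - f ∈ Fᗮ := by
      have h7 : F.orthogonalProjectionOnto (S (x : H) - f) = 0 := by
        rw [map_sub]
        have hrfl : F.orthogonalProjectionOnto (S (x : H)) = SF x := rfl
        rw [hrfl, hx, sub_self]
      have : (S (x : H) - f) - (F.orthogonalProjectionOnto (S (x : H) - f) : H) ∈ Fᗮ := Submodule.sub_starProjection_mem_orthogonal (K := F) (S (x : H) - f)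
      rwa [h7, Submodule.coe_zero, sub_zero] at this
    have hmem : w - (x : H) ∈ F := Submodule.sub_mem F hwF x.2
    have h8 : ⟪S (x : H) - f, w - (x : H)⟫ = 0 :=
      Submodule.inner_left_of_mem_orthogonal hmem horth
    have h9 : ⟪S w - f, w - (x : H)⟫
        = ⟪S w - S (x : H), w - (x : H)⟫ + ⟪S (x : H) - f, w - (x : H)⟫ := by
      rw [← inner_add_left]; congr 1; abel
    rw [h9, h8, add_zero]
    exact le_trans (by positivity) (hmono w (x : H))

lemma strong_mono_surjective {H : Type*} [NormedAddCommGroup H] [InnerProductSpace ℝ H]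
    [CompleteSpace H] (S : H → H) (c : ℝ) (hc : 0 < c)
    (rad : ∀ u v : H, ContinuousOn (fun t : ℝ => ⟪S (u + t • v), v⟫) (Set.Icc (0:ℝ) 1))
    (hmono : ∀ u w : H, c * ‖u - w‖ ^ 2 ≤ ⟪S u - S w, u - w⟫) :
    Surjective S := by
  intro f
  classical
  set D : Finset H → Set H := fun s =>
    {u : H | c * ‖u‖ ≤ ‖f‖ + ‖S 0‖ ∧ ∀ w ∈ s, 0 ≤ ⟪S w - f, w - u⟫} with hD_def
  have hDne : ∀ s, (D s).Nonempty := by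
    intro s
    obtain ⟨u, h1, h2⟩ := galerkin S c hc rad hmono f s
    exact ⟨u, h1, h2⟩
  have hDconv : ∀ s, Convex ℝ (D s) := by
    intro s
    intro u hu v hv a b ha hb hab
    constructor
    · calc c * ‖a • u + b • v‖ ≤ c * (a * ‖u‖ + b * ‖v‖) := by
            apply mul_le_mul_of_nonneg_left _ hc.le
            calc ‖a • u + b • v‖ ≤ ‖a • u‖ + ‖b • v‖ := norm_add_le _ _
              _ = a * ‖u‖ + b * ‖v‖ := by
                  rw [norm_smul, norm_smul, Real.norm_eq_abs, Real.norm_eq_abs,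
                    abs_of_nonneg ha, abs_of_nonneg hb]
        _ = a * (c * ‖u‖) + b * (c * ‖v‖) := by ring
        _ ≤ a * (‖f‖ + ‖S 0‖) + b * (‖f‖ + ‖S 0‖) := by
            have := hu.1; have := hv.1
            apply add_le_add
            · exact mul_le_mul_of_nonneg_left hu.1 ha
            · exact mul_le_mul_of_nonneg_left hv.1 hb
        _ = ‖f‖ + ‖S 0‖ := by rw [← add_mul, hab, one_mul]
    · intro w hw
      have h1 := hu.2 w hw
      have h2 := hv.2 w hw
      have h3 : w - (a • u + b • v) = a • (w - u) + b • (w - v) :=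
        calc w - (a • u + b • v) = (a + b) • w - (a • u + b • v) := by rw [hab, one_smul]
          _ = a • (w - u) + b • (w - v) := by rw [add_smul, smul_sub, smul_sub]; abel
      rw [h3, inner_add_right, real_inner_smul_right, real_inner_smul_right]
      have := mul_nonneg ha h1
      have := mul_nonneg hb h2
      linarith
  have hDclosed : ∀ s, IsClosed (D s) := by
    intro s
    have h1 : IsClosed {u : H | c * ‖u‖ ≤ ‖f‖ + ‖S 0‖} :=
      isClosed_le (by continuity) continuous_const
    have h2 : ∀ w : H, IsClosed {u : H | 0 ≤ ⟪S w - f, w - u⟫} := by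
      intro w
      apply isClosed_le continuous_const
      exact Continuous.inner continuous_const (continuous_const.sub continuous_id)
    have : D s = {u : H | c * ‖u‖ ≤ ‖f‖ + ‖S 0‖} ∩ ⋂ w ∈ s, {u : H | 0 ≤ ⟪S w - f, w - u⟫} := by
      ext u
      simp only [hD_def, Set.mem_setOf_eq, Set.mem_inter_iff, Set.mem_iInter]
    rw [this]
    exact h1.inter (isClosed_biInter fun w _ => h2 w)
  have hDmono : ∀ s t : Finset H, s ⊆ t → D t ⊆ D s := by
    intro s t hst u hu
    exact ⟨hu.1, fun w hw => hu.2 w (hst hw)⟩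
  -- minimal norm elements
  have hmin : ∀ s : Finset H, ∃ q, q ∈ D s ∧ ∀ v ∈ D s, ‖q‖ ≤ ‖v‖ := by
    intro s
    obtain ⟨v, hvK, hv⟩ := exists_norm_eq_iInf_of_complete_convex (hDne s)
      ((hDclosed s).isComplete) (hDconv s) 0
    refine ⟨v, hvK, fun w hw => ?_⟩
    have h1 : ‖(0:H) - v‖ = ‖v‖ := by rw [zero_sub, norm_neg]
    have hbdd : BddBelow (Set.range fun w' : D s => ‖(0:H) - w'‖) := by
      refine ⟨0, ?_⟩
      rintro _ ⟨w', rfl⟩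
      positivity
    have h2 : (⨅ w' : D s, ‖(0:H) - (w' : H)‖) ≤ ‖(0:H) - w‖ := ciInf_le hbdd ⟨w, hw⟩
    rw [zero_sub, norm_neg] at h2
    rw [← h1, hv]
    exact h2
  choose q hqmem hqmin using hmin
  set N : Finset H → ℝ := fun s => ‖q s‖ with hN_def
  have hNR : ∀ s, N s ≤ (‖f‖ + ‖S 0‖) / c := by
    intro s
    rw [le_div_iff₀ hc, mul_comm]
    exact (hqmem s).1
  have hNmono : ∀ s t : Finset H, s ⊆ t → N s ≤ N t :=
    fun s t hst => hqmin s (q t) (hDmono s t hst (hqmem t))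
  set M : ℝ := sSup (Set.range N) with hM_def
  have hrne : (Set.range N).Nonempty := ⟨N ∅, ⟨∅, rfl⟩⟩
  have hrbdd : BddAbove (Set.range N) := by
    refine ⟨(‖f‖ + ‖S 0‖) / c, ?_⟩
    rintro _ ⟨s, rfl⟩
    exact hNR s
  have hNM : ∀ s, N s ≤ M := fun s => le_csSup hrbdd ⟨s, rfl⟩
  have hM0 : 0 ≤ M := le_trans (norm_nonneg (q ∅)) (hNM ∅)
  -- parallelogram estimate
  have hpar : ∀ s t : Finset H, s ⊆ t → ‖q t - q s‖ ^ 2 ≤ 2 * M ^ 2 - 2 * (N s) ^ 2 := by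
    intro s t hst
    have hmid : ((1:ℝ)/2) • (q s + q t) ∈ D s := by
      have h1 : ((1:ℝ)/2) • (q s + q t) = ((1:ℝ)/2) • q s + ((1:ℝ)/2) • q t := by
        rw [smul_add]
      rw [h1]
      exact hDconv s (hqmem s) (hDmono s t hst (hqmem t)) (by norm_num) (by norm_num)
        (by norm_num)
    have h2 : N s ≤ ‖((1:ℝ)/2) • (q s + q t)‖ := hqmin s _ hmid
    have h3 : ‖((1:ℝ)/2) • (q s + q t)‖ = ‖q s + q t‖ / 2 := by
      rw [norm_smul, Real.norm_eq_abs, abs_of_pos (by norm_num : (0:ℝ) < 1/2)]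
      ring
    rw [h3] at h2
    have h4 := parallelogram_law_with_norm ℝ (q s) (q t)
    have h5 : N t ≤ M := hNM t
    have h6 : 0 ≤ N s := norm_nonneg _
    have h7 : ‖q t - q s‖ = ‖q s - q t‖ := by rw [norm_sub_rev]
    have h8 : N t = ‖q t‖ := rfl
    have h9 : N s = ‖q s‖ := rfl
    have hss : N s + N s ≤ ‖q s + q t‖ := by linarith
    have h10 : (N s + N s) * (N s + N s) ≤ ‖q s + q t‖ * ‖q s + q t‖ :=
      mul_self_le_mul_self (by linarith) hss
    have h11 : ‖q t‖ * ‖q t‖ ≤ M * M := mul_self_le_mul_self (norm_nonneg _) (h8 ▸ h5)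
    rw [norm_sub_rev, sq]
    nlinarith [h4, h10, h11]
  -- choose an increasing sequence approaching the sup
  have hex : ∀ n : ℕ, ∃ s : Finset H, M - 1/(n+1) < N s := by
    intro n
    have h1 : M - 1/(n+1) < M := by
      have : (0:ℝ) < 1/(n+1) := by positivity
      linarith
    obtain ⟨_, ⟨s, rfl⟩, hs⟩ := exists_lt_of_lt_csSup hrne h1
    exact ⟨s, hs⟩
  choose σ hσ using hex
  set t : ℕ → Finset H := fun n => (Finset.range (n+1)).biUnion σ with ht_def
  have htmono : ∀ m n : ℕ, m ≤ n → t m ⊆ t n := by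
    intro m n hmn
    apply Finset.biUnion_subset_biUnion_of_subset_left
    exact Finset.range_subset_range.mpr (by omega)
  have hσt : ∀ n, σ n ⊆ t n := by
    intro n
    intro w hw
    rw [ht_def, Finset.mem_biUnion]
    exact ⟨n, Finset.mem_range.mpr (by omega), hw⟩
  have hNt : ∀ n : ℕ, M - 1/(n+1) < N (t n) :=
    fun n => lt_of_lt_of_le (hσ n) (hNmono _ _ (hσt n))
  -- the key quantitative bound
  have hqB : ∀ (n : ℕ) (s' : Finset H), t n ⊆ s' → ‖q s' - q (t n)‖ ^ 2 ≤ 4 * M / (n+1) := by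
    intro n s' hsub
    have h1 := hpar (t n) s' hsub
    have h2 := hNt n
    have h3 : N (t n) ≤ M := hNM _
    have h4 : 0 ≤ N (t n) := norm_nonneg _
    have h5 : 2 * M ^ 2 - 2 * (N (t n)) ^ 2 = 2 * (M - N (t n)) * (M + N (t n)) := by ring
    have h6 : M - N (t n) ≤ 1/(n+1) := by linarith
    have h7 : M + N (t n) ≤ 2 * M := by linarith
    have h8 : 0 ≤ M - N (t n) := by linarith
    calc ‖q s' - q (t n)‖ ^ 2 ≤ 2 * (M - N (t n)) * (M + N (t n)) := by rw [← h5]; exact h1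
      _ ≤ 2 * (1/(n+1)) * (2 * M) := by
          apply mul_le_mul _ h7 (by linarith) (by positivity)
          apply mul_le_mul_of_nonneg_left h6 (by norm_num)
      _ = 4 * M / (n+1) := by ring
  set p : ℕ → H := fun n => q (t n) with hp_def
  have hsq0 : Tendsto (fun n : ℕ => Real.sqrt (4 * M / (n+1))) atTop (nhds 0) := by
    have h1 : Tendsto (fun n : ℕ => 4 * M / (n+1)) atTop (nhds 0) := by
      have := tendsto_one_div_add_atTop_nhds_zero_nat.const_mul (4 * M)
      rw [mul_zero] at this
      convert this using 2 with n
      ring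
    have := h1.sqrt
    rwa [Real.sqrt_zero] at this
  have hcauchy : CauchySeq p := by
    refine cauchySeq_of_le_tendsto_0 (fun n => Real.sqrt (4 * M / (n+1))) ?_ hsq0
    intro m n N0 hm hn
    wlog hmn : m ≤ n generalizing m n
    · rw [dist_comm]
      exact this n m hn hm (by omega)
    have h1 := hqB m (t n) (htmono m n hmn)
    have h2 : dist (p m) (p n) = ‖q (t n) - q (t m)‖ := by
      rw [dist_eq_norm, hp_def, norm_sub_rev]
    rw [h2]
    have h3 : (4:ℝ) * M / (m+1) ≤ 4 * M / (N0+1) := by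
      apply div_le_div_of_nonneg_left (by linarith) (by positivity)
      have : (N0:ℝ) ≤ m := by exact_mod_cast hm
      linarith
    have h4 : ‖q (t n) - q (t m)‖ ^ 2 ≤ 4 * M / (N0+1) := le_trans h1 h3
    have h5 : Real.sqrt (‖q (t n) - q (t m)‖ ^ 2) ≤ Real.sqrt (4 * M / (N0+1)) :=
      Real.sqrt_le_sqrt h4
    rwa [Real.sqrt_sq (norm_nonneg _)] at h5
  obtain ⟨ustar, hustar⟩ := cauchySeq_tendsto_of_complete hcauchy
  -- u* is in every C_w
  have hCw : ∀ w : H, 0 ≤ ⟪S w - f, w - ustar⟫ := by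
    intro w
    set r : ℕ → H := fun n => q (t n ∪ {w}) with hr_def
    have hb : ∀ n : ℕ, ‖r n - p n‖ ≤ Real.sqrt (4 * M / (n+1)) := by
      intro n
      have h1 := hqB n (t n ∪ {w}) Finset.subset_union_left
      have h2 : Real.sqrt (‖q (t n ∪ {w}) - q (t n)‖ ^ 2) ≤ Real.sqrt (4 * M / (n+1)) :=
        Real.sqrt_le_sqrt h1
      rwa [Real.sqrt_sq (norm_nonneg _)] at h2
    have hrp : Tendsto (fun n => r n - p n) atTop (nhds 0) := by
      rw [tendsto_zero_iff_norm_tendsto_zero]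
      exact squeeze_zero (fun n => norm_nonneg _) hb hsq0
    have hr : Tendsto r atTop (nhds ustar) := by
      have h3 := hrp.add hustar
      rw [zero_add] at h3
      have h4 : (fun n => (r n - p n) + p n) = r := by funext n; abel
      rwa [h4] at h3
    have h5 : ∀ n : ℕ, 0 ≤ ⟪S w - f, w - r n⟫ := by
      intro n
      have h6 : r n ∈ D (t n ∪ {w}) := hqmem _
      exact h6.2 w (Finset.mem_union_right _ (Finset.mem_singleton_self w))
    have h7 : Tendsto (fun n => ⟪S w - f, w - r n⟫) atTop (nhds ⟪S w - f, w - ustar⟫) :=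
      tendsto_const_nhds.inner (tendsto_const_nhds.sub hr)
    exact ge_of_tendsto h7 (Filter.Eventually.of_forall h5)
  have hmono0 : ∀ u w : H, 0 ≤ ⟪S u - S w, u - w⟫ :=
    fun u w => le_trans (by positivity) (hmono u w)
  refine ⟨ustar, ?_⟩
  have hfin : ∀ w : H, 0 ≤ ⟪f - S w, ustar - w⟫ := by
    intro w
    have := hCw w
    have h8 : ⟪f - S w, ustar - w⟫ = ⟪S w - f, w - ustar⟫ := by
      rw [show f - S w = -(S w - f) by abel, show ustar - w = -(w - ustar) by abel,
        inner_neg_neg]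
    rw [h8]
    exact this
  exact (minty_lemma S hmono0 rad ustar f hfin).symm

/-- If `A` is a radially continuous one-sided contraction on a real Hilbert
space, then `I - A` is a bijection with a continuous inverse. -/
theorem one_sided_contraction_id_sub_bijective
    {H : Type*} [NormedAddCommGroup H] [InnerProductSpace ℝ H] [CompleteSpace H]
    (A : H → H)
    (hArad : ∀ u w : H,
      ContinuousOn (fun t : ℝ => ⟪A (u + t • w), w⟫) (Set.Icc (0 : ℝ) 1))
    (m : ℝ) (hm : m < 1)
    (hA : ∀ u w : H, ⟪A u - A w, u - w⟫ ≤ m * ‖u - w‖ ^ 2) :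
    ∃ g : H → H, Continuous g ∧
      Function.LeftInverse g (fun u => u - A u) ∧
      Function.RightInverse g (fun u => u - A u) := by
  set T : H → H := fun u => u - A u with hT_def
  set c : ℝ := 1 - m with hc_def
  have hc : 0 < c := by rw [hc_def]; linarith
  have hmono : ∀ u w : H, c * ‖u - w‖ ^ 2 ≤ ⟪T u - T w, u - w⟫ := by
    intro u w
    have h1 : T u - T w = (u - w) - (A u - A w) := by rw [hT_def]; dsimp only; abel
    rw [h1, inner_sub_left, real_inner_self_eq_norm_sq]
    have := hA u w
    rw [hc_def]
    nlinarith
  have hrad : ∀ u v : H, ContinuousOn (fun t : ℝ => ⟪T (u + t • v), v⟫) (Set.Icc (0:ℝ) 1) := by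
    intro u v
    have h1 : ∀ t : ℝ, ⟪T (u + t • v), v⟫ = ⟪u + t • v, v⟫ - ⟪A (u + t • v), v⟫ := by
      intro t
      rw [hT_def]
      dsimp only
      rw [inner_sub_left]
    simp only [h1]
    apply ContinuousOn.sub
    · apply Continuous.continuousOn
      exact ((continuous_const.add (continuous_id.smul continuous_const)).inner
        continuous_const)
    · exact hArad u v
  have hsurj : Surjective T := strong_mono_surjective T c hc hrad hmono
  have hinj : Function.Injective T := by
    intro u w huw
    have h1 := hmono u w
    rw [huw, sub_self, inner_zero_left] at h1
    have h2 : ‖u - w‖ ^ 2 ≤ 0 := by nlinarith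
    have h3 : ‖u - w‖ = 0 := by nlinarith [norm_nonneg (u - w), sq_nonneg ‖u - w‖]
    rw [norm_eq_zero, sub_eq_zero] at h3
    exact h3
  set g : H → H := surjInv hsurj with hg_def
  have hright : Function.RightInverse g T := rightInverse_surjInv hsurj
  have hleft : Function.LeftInverse g T := by
    intro u
    apply hinj
    exact hright (T u)
  have hlip : ∀ a b : H, c * ‖g a - g b‖ ≤ ‖a - b‖ := by
    intro a b
    have h1 := hmono (g a) (g b)
    have h2 : T (g a) = a := hright a
    have h3 : T (g b) = b := hright b
    rw [h2, h3] at h1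
    have h4 : ⟪a - b, g a - g b⟫ ≤ ‖a - b‖ * ‖g a - g b‖ := real_inner_le_norm _ _
    rcases eq_or_lt_of_le (norm_nonneg (g a - g b)) with h5 | h5
    · rw [← h5, mul_zero]
      positivity
    · have h6 : c * ‖g a - g b‖ * ‖g a - g b‖ ≤ ‖a - b‖ * ‖g a - g b‖ := by nlinarith
      exact le_of_mul_le_mul_right h6 h5
  have hcont : Continuous g := by
    rw [Metric.continuous_iff]
    intro b ε hε
    refine ⟨c * ε, by positivity, fun a ha => ?_⟩
    have h1 := hlip a b
    rw [dist_eq_norm] at ha ⊢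
    have h2 : c * ‖g a - g b‖ < c * ε := lt_of_le_of_lt h1 ha
    exact lt_of_mul_lt_mul_left h2 hc.le
  exact ⟨g, hcont, hleft, hright⟩
end

section
/- Let q > 1 and let ψ_q(ζ) = |ζ|^{q−2}ζ. Let g : [0,1] × ℝ² → ℝ and h₀, h₁ : ℝ → ℝ be continuous, and A₀, A₁ : [0,1] → ℝ of bounded variation. For every u, v ∈ C[0,1] there is exactly one c = c(u,v) ∈ ℝ such that ∫₀¹ ψ_q^{-1}( c − ∫₀^s g(τ, u(τ), v(τ)) dτ ) ds = ∫₀¹ h₁(v(s)) dA₁(s) − ∫₀¹ h₀(v(s)) dA₀(s); moreover the map (u,v) ↦ c(u,v) is continuous on C[0,1] × C[0,1]. -/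
noncomputable section

open MeasureTheory Set Filter Bornology

/-- `I` is the Riemann–Stieltjes integral `∫₀¹ f dA`. -/
def IsRSIntegral (f A : ℝ → ℝ) (I : ℝ) : Prop :=
  ∀ ε > (0:ℝ), ∃ δ > (0:ℝ), ∀ (n : ℕ) (t ξ : ℕ → ℝ),
    0 < n → t 0 = 0 → t n = 1 →
    (∀ i < n, t i ≤ t (i+1) ∧ t (i+1) - t i ≤ δ ∧ ξ i ∈ Set.Icc (t i) (t (i+1))) →
    |(∑ i ∈ Finset.range n, f (ξ i) * (A (t (i+1)) - A (t i))) - I| ≤ ε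

/-- `ψ_q(ζ) = |ζ|^{q-2} ζ`. -/
def psiQ (q ζ : ℝ) : ℝ := |ζ| ^ (q - 2) * ζ

/-- `ψ_q⁻¹(η) = |η|^{(2-q)/(q-1)} η`. -/
def psiQInv (q η : ℝ) : ℝ := |η| ^ ((2 - q)/(q - 1)) * η

/-- The space `C[0,1]`. -/
abbrev C01 := C(Set.Icc (0:ℝ) 1, ℝ)

/-- Extension of `v ∈ C[0,1]` to `ℝ` by projection onto `[0,1]`. -/
def extC (v : C01) : ℝ → ℝ := fun t => v (Set.projIcc 0 1 (by norm_num) t)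

namespace RSP

/-- Riemann–Stieltjes sum. -/
def rsum (f A : ℝ → ℝ) (n : ℕ) (t ξ : ℕ → ℝ) : ℝ :=
  ∑ i ∈ Finset.range n, f (ξ i) * (A (t (i+1)) - A (t i))

lemma mono_of_steps {n : ℕ} {t : ℕ → ℝ} (h : ∀ i < n, t i ≤ t (i+1)) :
    ∀ {i j : ℕ}, i ≤ j → j ≤ n → t i ≤ t j := by
  intro i j hij hjn
  induction j with
  | zero => simp_all
  | succ k ih =>
    rcases Nat.eq_or_lt_of_le hij with h1 | h1
    · exact le_of_eq (by rw [h1])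
    · exact le_trans (ih (Nat.lt_succ_iff.mp h1) (le_trans (Nat.le_succ k) hjn))
        (h k (Nat.lt_of_lt_of_le (Nat.lt_succ_self k) hjn))

lemma clamp_step (A : ℝ → ℝ) {a b c d : ℝ} (hab : a ≤ b) (hcd : c ≤ d) :
    A (max (min b d) (max a c)) - A (max a c)
      = A (max a (min b d)) - A (max a (min b c)) := by
  rcases le_or_gt c b with h | h
  · have h1 : min b c = c := min_eq_right h
    have hc : c ≤ max (min b d) a := le_max_of_le_left (le_min h hcd)
    have h2 : max (min b d) (max a c) = max a (min b d) := by
      rw [← max_assoc, max_eq_left hc, max_comm]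
    rw [h1, h2]
  · have hbd : min b d = b := min_eq_left (le_of_lt (lt_of_lt_of_le h hcd))
    have hbc : min b c = b := min_eq_left h.le
    have hac : max a c = c := max_eq_right (hab.trans h.le)
    rw [hbd, hbc, hac, max_eq_right h.le, sub_self, sub_self]

/-- Telescoping: row sums of `e i j` give the increments of `A`. -/
lemma sum_e (A : ℝ → ℝ) {a b : ℝ} (hab : a ≤ b) (ha : 0 ≤ a) (hb : b ≤ 1)
    {m : ℕ} {s : ℕ → ℝ} (hs0 : s 0 = 0) (hsm : s m = 1) (hmono : ∀ j < m, s j ≤ s (j+1)) :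
    ∑ j ∈ Finset.range m, (A (max (min b (s (j+1))) (max a (s j))) - A (max a (s j)))
      = A b - A a := by
  have : ∑ j ∈ Finset.range m, (A (max (min b (s (j+1))) (max a (s j))) - A (max a (s j)))
      = ∑ j ∈ Finset.range m,
          ((fun k => A (max a (min b (s k)))) (j+1) - (fun k => A (max a (min b (s k)))) j) := by
    refine Finset.sum_congr rfl fun j hj => ?_
    exact clamp_step A hab (hmono j (Finset.mem_range.mp hj))
  rw [this]
  rw [Finset.sum_range_sub (fun k => A (max a (min b (s k)))) m]
  simp only [hsm, hs0]
  rw [min_eq_left hb, max_eq_right hab, min_eq_right (ha.trans hab), max_eq_left ha]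

/-- Row sums of `|e i j|` are bounded by the variation on `[a,b]` (ENNReal level). -/
lemma sum_e_var (A : ℝ → ℝ) {a b : ℝ} (hab : a ≤ b)
    {m : ℕ} {s : ℕ → ℝ} (hmono : ∀ j < m, s j ≤ s (j+1)) :
    ∑ j ∈ Finset.range m,
        ENNReal.ofReal |A (max (min b (s (j+1))) (max a (s j))) - A (max a (s j))|
      ≤ eVariationOn A (Icc a b) := by
  have humono : Monotone (fun j => max a (min b (s (min j m)))) := by
    intro i j hij
    exact max_le_max le_rfl (min_le_min le_rfl
      (mono_of_steps hmono (min_le_min hij le_rfl) (min_le_right _ _)))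
  have humem : ∀ j, (fun j => max a (min b (s (min j m)))) j ∈ Icc a b := fun j =>
    ⟨le_max_left _ _, max_le hab (min_le_left _ _)⟩
  have key := eVariationOn.sum_le (f := A) (n := m) humono humem
  refine le_trans (le_of_eq (Finset.sum_congr rfl fun j hj => ?_)) key
  have hjm := Finset.mem_range.mp hj
  rw [edist_dist, Real.dist_eq]
  simp only [min_eq_left hjm.le, min_eq_left (Nat.succ_le_of_lt hjm)]
  exact congrArg ENNReal.ofReal (congrArg abs (clamp_step A hab (hmono j hjm)))

lemma sum_eVar_le (A : ℝ → ℝ) {n : ℕ} {t : ℕ → ℝ} (ht0 : t 0 = 0) (htn : t n = 1)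
    (hmono : ∀ i < n, t i ≤ t (i+1)) :
    ∑ i ∈ Finset.range n, eVariationOn A (Icc (t i) (t (i+1))) ≤ eVariationOn A (Icc 0 1) := by
  have key : ∀ k ≤ n, ∑ i ∈ Finset.range k, eVariationOn A (Icc (t i) (t (i+1)))
      ≤ eVariationOn A (Icc (t 0) (t k)) := by
    intro k hk
    induction k with
    | zero => simp
    | succ k ih =>
      rw [Finset.sum_range_succ]
      have h1 := ih (le_trans (Nat.le_succ k) hk)
      have h2 : t 0 ≤ t k := mono_of_steps hmono (Nat.zero_le k) (le_trans (Nat.le_succ k) hk)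
      have h3 : t k ≤ t (k+1) := hmono k (Nat.lt_of_lt_of_le (Nat.lt_succ_self k) hk)
      calc ∑ i ∈ Finset.range k, eVariationOn A (Icc (t i) (t (i+1)))
            + eVariationOn A (Icc (t k) (t (k+1)))
          ≤ eVariationOn A (Icc (t 0) (t k)) + eVariationOn A (Icc (t k) (t (k+1))) := by
            exact add_le_add_left h1 _
        _ = eVariationOn A (Icc (t 0) (t (k+1))) := by
            have := eVariationOn.Icc_add_Icc A (s := univ) h2 h3 (mem_univ _)
            simpa [univ_inter] using this
  have := key n le_rfl
  rwa [ht0, htn] at this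

end RSP

namespace RSP2
open RSP

lemma rsum_sub_bound {f A : ℝ → ℝ} {ε δ : ℝ} (hδ : 0 ≤ δ)
    (hf : ∀ x ∈ Icc (0:ℝ) 1, ∀ y ∈ Icc (0:ℝ) 1, |x - y| ≤ 2*δ → |f x - f y| ≤ ε)
    (hA : BoundedVariationOn A (Icc 0 1))
    {n m : ℕ} {t ξ s η : ℕ → ℝ}
    (ht0 : t 0 = 0) (htn : t n = 1)
    (hP : ∀ i < n, t i ≤ t (i+1) ∧ t (i+1) - t i ≤ δ ∧ ξ i ∈ Icc (t i) (t (i+1)))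
    (hs0 : s 0 = 0) (hsm : s m = 1)
    (hQ : ∀ j < m, s j ≤ s (j+1) ∧ s (j+1) - s j ≤ δ ∧ η j ∈ Icc (s j) (s (j+1))) :
    |rsum f A n t ξ - rsum f A m s η| ≤ ε * (eVariationOn A (Icc 0 1)).toReal := by
  have hε : 0 ≤ ε := by
    have := hf 0 ⟨le_rfl, by norm_num⟩ 0 ⟨le_rfl, by norm_num⟩ (by simpa using by linarith)
    simpa using this
  set e : ℕ → ℕ → ℝ := fun i j =>
    A (max (min (t (i+1)) (s (j+1))) (max (t i) (s j))) - A (max (t i) (s j)) with he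
  have htm : ∀ i < n, t i ≤ t (i+1) := fun i h => (hP i h).1
  have hsm' : ∀ j < m, s j ≤ s (j+1) := fun j h => (hQ j h).1
  have htIcc : ∀ i ≤ n, t i ∈ Icc (0:ℝ) 1 := by
    intro i hi
    constructor
    · rw [← ht0]; exact mono_of_steps htm (Nat.zero_le i) hi
    · rw [← htn]; exact mono_of_steps htm hi le_rfl
  have hsIcc : ∀ j ≤ m, s j ∈ Icc (0:ℝ) 1 := by
    intro j hj
    constructor
    · rw [← hs0]; exact mono_of_steps hsm' (Nat.zero_le j) hj
    · rw [← hsm]; exact mono_of_steps hsm' hj le_rfl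
  have step1 : rsum f A n t ξ = ∑ i ∈ Finset.range n, ∑ j ∈ Finset.range m, f (ξ i) * e i j := by
    unfold rsum
    refine Finset.sum_congr rfl fun i hi => ?_
    have hi' := Finset.mem_range.mp hi
    rw [← sum_e A (htm i hi') (htIcc i hi'.le).1 (htIcc (i+1) hi').2 hs0 hsm hsm',
      Finset.mul_sum]
  have step2 : rsum f A m s η = ∑ j ∈ Finset.range m, ∑ i ∈ Finset.range n, f (η j) * e i j := by
    unfold rsum
    refine Finset.sum_congr rfl fun j hj => ?_
    have hj' := Finset.mem_range.mp hj
    rw [← sum_e A (hsm' j hj') (hsIcc j hj'.le).1 (hsIcc (j+1) hj').2 ht0 htn htm,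
      Finset.mul_sum]
    refine Finset.sum_congr rfl fun i _ => ?_
    have h1 : max (min (s (j+1)) (t (i+1))) (max (s j) (t i))
        = max (min (t (i+1)) (s (j+1))) (max (t i) (s j)) := by
      rw [min_comm, max_comm (s j)]
    rw [he]
    simp only []
    rw [h1, max_comm (s j) (t i)]
  have step3 : rsum f A n t ξ - rsum f A m s η
      = ∑ i ∈ Finset.range n, ∑ j ∈ Finset.range m, (f (ξ i) - f (η j)) * e i j := by
    rw [step1, step2, Finset.sum_comm (s := Finset.range m), ← Finset.sum_sub_distrib]
    refine Finset.sum_congr rfl fun i _ => ?_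
    rw [← Finset.sum_sub_distrib]
    refine Finset.sum_congr rfl fun j _ => ?_
    ring
  rw [step3]
  have step4 : |∑ i ∈ Finset.range n, ∑ j ∈ Finset.range m, (f (ξ i) - f (η j)) * e i j|
      ≤ ∑ i ∈ Finset.range n, ∑ j ∈ Finset.range m, ε * |e i j| := by
    refine le_trans (Finset.abs_sum_le_sum_abs _ _) (Finset.sum_le_sum fun i hi => ?_)
    refine le_trans (Finset.abs_sum_le_sum_abs _ _) (Finset.sum_le_sum fun j hj => ?_)
    have hi' := Finset.mem_range.mp hi
    have hj' := Finset.mem_range.mp hj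
    rcases le_or_gt (max (t i) (s j)) (min (t (i+1)) (s (j+1))) with hov | hov
    · have hξ := (hP i hi').2.2
      have hη := (hQ j hj').2.2
      have h1 : t i ≤ s (j+1) := le_trans (le_max_left _ _) (le_trans hov (min_le_right _ _))
      have h2 : s j ≤ t (i+1) := le_trans (le_max_right _ _) (le_trans hov (min_le_left _ _))
      have hd1 := (hP i hi').2.1
      have hd2 := (hQ j hj').2.1
      have hfb : |f (ξ i) - f (η j)| ≤ ε := by
        refine hf _ ⟨le_trans (htIcc i hi'.le).1 hξ.1, le_trans hξ.2 (htIcc (i+1) hi').2⟩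
          _ ⟨le_trans (hsIcc j hj'.le).1 hη.1, le_trans hη.2 (hsIcc (j+1) hj').2⟩ ?_
        have := hξ.1; have := hξ.2; have := hη.1; have := hη.2
        rw [abs_le]; constructor <;> linarith
      rw [abs_mul]
      exact mul_le_mul_of_nonneg_right hfb (abs_nonneg _)
    · have : e i j = 0 := by
        rw [he]
        simp only []
        rw [max_eq_right hov.le, sub_self]
      rw [this]
      simp
  refine le_trans step4 ?_
  have hVfin : (eVariationOn A (Icc (0:ℝ) 1)) ≠ ⊤ := hA
  have hVi : ∀ i < n, eVariationOn A (Icc (t i) (t (i+1))) ≠ ⊤ := by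
    intro i hi
    refine ne_top_of_le_ne_top hVfin (eVariationOn.mono A ?_)
    exact Icc_subset_Icc (htIcc i hi.le).1 (htIcc (i+1) hi).2
  have inner : ∀ i < n, ∑ j ∈ Finset.range m, |e i j|
      ≤ (eVariationOn A (Icc (t i) (t (i+1)))).toReal := by
    intro i hi
    have h1 := sum_e_var A (htm i hi) (m := m) (s := s) hsm'
    have h2 : ∑ j ∈ Finset.range m, |e i j|
        = (∑ j ∈ Finset.range m, ENNReal.ofReal |e i j|).toReal := by
      rw [ENNReal.toReal_sum (fun a _ => ENNReal.ofReal_ne_top)]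
      exact Finset.sum_congr rfl fun j _ => (ENNReal.toReal_ofReal (abs_nonneg _)).symm
    rw [h2]
    exact ENNReal.toReal_mono (hVi i hi) h1
  calc ∑ i ∈ Finset.range n, ∑ j ∈ Finset.range m, ε * |e i j|
      = ε * ∑ i ∈ Finset.range n, ∑ j ∈ Finset.range m, |e i j| := by
        rw [Finset.mul_sum]
        exact Finset.sum_congr rfl fun i _ => by rw [Finset.mul_sum]
    _ ≤ ε * (eVariationOn A (Icc 0 1)).toReal := by
        refine mul_le_mul_of_nonneg_left ?_ hε
        calc ∑ i ∈ Finset.range n, ∑ j ∈ Finset.range m, |e i j|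
            ≤ ∑ i ∈ Finset.range n, (eVariationOn A (Icc (t i) (t (i+1)))).toReal :=
              Finset.sum_le_sum fun i hi => inner i (Finset.mem_range.mp hi)
          _ = (∑ i ∈ Finset.range n, eVariationOn A (Icc (t i) (t (i+1)))).toReal :=
              (ENNReal.toReal_sum (fun i hi => hVi i (Finset.mem_range.mp hi))).symm
          _ ≤ (eVariationOn A (Icc 0 1)).toReal :=
              ENNReal.toReal_mono hVfin (sum_eVar_le A ht0 htn htm)

end RSP2

namespace RSP3
open RSP RSP2

lemma le_of_forall_pos {a b : ℝ} (h : ∀ ε : ℝ, 0 < ε → a ≤ b + ε) : a ≤ b := by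
  by_contra hc
  push_neg at hc
  have := h ((a - b)/2) (by linarith)
  linarith

lemma modulus {f : ℝ → ℝ} (hf : Continuous f) {ε : ℝ} (hε : 0 < ε) :
    ∃ δ > (0:ℝ), ∀ x ∈ Icc (0:ℝ) 1, ∀ y ∈ Icc (0:ℝ) 1, |x - y| ≤ 2*δ → |f x - f y| ≤ ε := by
  have huc : UniformContinuousOn f (Icc 0 1) :=
    isCompact_Icc.uniformContinuousOn_of_continuous hf.continuousOn
  rw [Metric.uniformContinuousOn_iff] at huc
  obtain ⟨δ, hδ, h⟩ := huc ε hε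
  exact ⟨δ/3, by linarith, fun x hx y hy hxy =>
    le_of_lt (h x hx y hy (by rw [Real.dist_eq]; linarith))⟩

lemma unif_t0 (N : ℕ) : ((0:ℕ):ℝ)/((N:ℝ)+1) = 0 := by simp

lemma unif_tn (N : ℕ) : ((N+1:ℕ):ℝ)/((N:ℝ)+1) = 1 := by
  have : ((N:ℝ)+1) ≠ 0 := by positivity
  push_cast
  field_simp

lemma unif_steps (N : ℕ) {δ : ℝ} (h : 1/((N:ℝ)+1) ≤ δ) :
    ∀ i < N + 1, ((i:ℕ):ℝ)/((N:ℝ)+1) ≤ ((i+1:ℕ):ℝ)/((N:ℝ)+1) ∧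
      ((i+1:ℕ):ℝ)/((N:ℝ)+1) - ((i:ℕ):ℝ)/((N:ℝ)+1) ≤ δ ∧
      ((i:ℕ):ℝ)/((N:ℝ)+1) ∈ Icc (((i:ℕ):ℝ)/((N:ℝ)+1)) (((i+1:ℕ):ℝ)/((N:ℝ)+1)) := by
  intro i _
  have hpos : (0:ℝ) < (N:ℝ)+1 := by positivity
  have h1 : ((i:ℕ):ℝ)/((N:ℝ)+1) ≤ ((i+1:ℕ):ℝ)/((N:ℝ)+1) := by
    rw [div_le_div_iff₀ hpos hpos]
    have : ((i:ℕ):ℝ) ≤ ((i+1:ℕ):ℝ) := by exact_mod_cast Nat.le_succ i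
    nlinarith
  have h2 : ((i+1:ℕ):ℝ)/((N:ℝ)+1) - ((i:ℕ):ℝ)/((N:ℝ)+1) = 1/((N:ℝ)+1) := by
    push_cast; ring
  exact ⟨h1, by rw [h2]; exact h, le_rfl, h1⟩

lemma mesh_small {δ : ℝ} (hδ : 0 < δ) : ∃ N₀ : ℕ, ∀ N : ℕ, N₀ ≤ N → 1/((N:ℝ)+1) ≤ δ := by
  obtain ⟨N₀, hN₀⟩ := exists_nat_gt (1/δ)
  refine ⟨N₀, fun N hN => ?_⟩
  have h1 : 1/δ ≤ (N:ℝ)+1 := by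
    have : (N₀:ℝ) ≤ (N:ℝ) := Nat.cast_le.mpr hN
    linarith
  have h2 : (0:ℝ) < 1/δ := by positivity
  calc 1/((N:ℝ)+1) ≤ 1/(1/δ) := one_div_le_one_div_of_le h2 h1
    _ = δ := one_div_one_div δ

lemma sum_abs_deltaA_le {A : ℝ → ℝ} (hA : BoundedVariationOn A (Icc 0 1))
    {n : ℕ} {t : ℕ → ℝ} (ht0 : t 0 = 0) (htn : t n = 1) (hmono : ∀ i < n, t i ≤ t (i+1)) :
    ∑ i ∈ Finset.range n, |A (t (i+1)) - A (t i)| ≤ (eVariationOn A (Icc 0 1)).toReal := by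
  have humono : Monotone (fun i => t (min i n)) := fun i j hij =>
    mono_of_steps hmono (min_le_min hij le_rfl) (min_le_right _ _)
  have humem : ∀ i, (fun i => t (min i n)) i ∈ Icc (0:ℝ) 1 := by
    intro i
    constructor
    · rw [← ht0]; exact mono_of_steps hmono (Nat.zero_le _) (min_le_right _ _)
    · rw [← htn]; exact mono_of_steps hmono (min_le_right _ _) le_rfl
  have key := eVariationOn.sum_le (f := A) (n := n) humono humem
  have h2 : ∑ i ∈ Finset.range n, |A (t (i+1)) - A (t i)|
      = (∑ i ∈ Finset.range n, edist (A ((fun i => t (min i n)) (i+1)))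
          (A ((fun i => t (min i n)) i))).toReal := by
    rw [ENNReal.toReal_sum (fun a _ => by rw [edist_dist]; exact ENNReal.ofReal_ne_top)]
    refine Finset.sum_congr rfl fun i hi => ?_
    have hi' := Finset.mem_range.mp hi
    rw [edist_dist, Real.dist_eq, ENNReal.toReal_ofReal (abs_nonneg _)]
    simp only [min_eq_left hi'.le, min_eq_left (Nat.succ_le_of_lt hi')]
  rw [h2]
  exact ENNReal.toReal_mono hA key

lemma exists_rs {f A : ℝ → ℝ} (hf : Continuous f) (hA : BoundedVariationOn A (Icc 0 1)) :
    ∃ I, IsRSIntegral f A I := by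
  set V := (eVariationOn A (Icc 0 1)).toReal with hV
  have hV0 : 0 ≤ V := ENNReal.toReal_nonneg
  set S : ℕ → ℝ := fun N => rsum f A (N+1) (fun i => (i:ℝ)/((N:ℝ)+1)) (fun i => (i:ℝ)/((N:ℝ)+1))
    with hS
  have hpair : ∀ {ε δ : ℝ}, 0 < δ →
      (∀ x ∈ Icc (0:ℝ) 1, ∀ y ∈ Icc (0:ℝ) 1, |x - y| ≤ 2*δ → |f x - f y| ≤ ε) →
      ∀ N M : ℕ, 1/((N:ℝ)+1) ≤ δ → 1/((M:ℝ)+1) ≤ δ → |S N - S M| ≤ ε * V := by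
    intro ε δ hδ hmod N M hN hM
    exact rsum_sub_bound hδ.le hmod hA (unif_t0 N) (unif_tn N) (unif_steps N hN)
      (unif_t0 M) (unif_tn M) (unif_steps M hM)
  have hcauchy : CauchySeq S := by
    rw [Metric.cauchySeq_iff]
    intro ε hε
    have hε' : 0 < ε/(2*(V+1)) := by positivity
    obtain ⟨δ, hδ, hmod⟩ := modulus hf hε'
    obtain ⟨N₀, hN₀⟩ := mesh_small hδ
    refine ⟨N₀, fun p hp r hr => ?_⟩
    rw [Real.dist_eq]
    calc |S p - S r| ≤ (ε/(2*(V+1))) * V := hpair hδ hmod p r (hN₀ p hp) (hN₀ r hr)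
      _ < ε := by
        rw [div_mul_eq_mul_div, div_lt_iff₀ (by positivity)]
        nlinarith
  obtain ⟨I, hI⟩ := cauchySeq_tendsto_of_complete hcauchy
  refine ⟨I, fun ε hε => ?_⟩
  have hε' : 0 < ε/(2*(V+1)) := by positivity
  obtain ⟨δ, hδ, hmod⟩ := modulus hf hε'
  refine ⟨δ, hδ, fun n t ξ hn ht0 htn hP => ?_⟩
  obtain ⟨N₀, hN₀⟩ := mesh_small hδ
  obtain ⟨N₁, hN₁⟩ := (Metric.tendsto_atTop.mp hI (ε/2) (by linarith))
  set k := max N₀ N₁ with hk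
  have hmesh : 1/((k:ℝ)+1) ≤ δ := hN₀ k (le_max_left _ _)
  have hclose : |S k - I| ≤ ε/2 := by
    have := hN₁ k (le_max_right _ _)
    rw [Real.dist_eq] at this
    exact this.le
  have hdiff : |rsum f A n t ξ - S k| ≤ (ε/(2*(V+1))) * V :=
    rsum_sub_bound hδ.le hmod hA ht0 htn hP (unif_t0 k) (unif_tn k) (unif_steps k hmesh)
  have hsmall : (ε/(2*(V+1))) * V ≤ ε/2 := by
    rw [div_mul_eq_mul_div, div_le_div_iff₀ (by positivity) (by positivity)]
    nlinarith
  calc |(∑ i ∈ Finset.range n, f (ξ i) * (A (t (i+1)) - A (t i))) - I|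
      ≤ |rsum f A n t ξ - S k| + |S k - I| := by
        rw [show (∑ i ∈ Finset.range n, f (ξ i) * (A (t (i+1)) - A (t i))) = rsum f A n t ξ
          from rfl]
        exact abs_sub_le _ _ _
    _ ≤ ε/2 + ε/2 := add_le_add (le_trans hdiff hsmall) hclose
    _ = ε := by ring

lemma rs_dist {f f' A : ℝ → ℝ} {I I' M : ℝ} (hA : BoundedVariationOn A (Icc 0 1))
    (h : IsRSIntegral f A I) (h' : IsRSIntegral f' A I')
    (hM : ∀ x ∈ Icc (0:ℝ) 1, |f x - f' x| ≤ M) :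
    |I - I'| ≤ M * (eVariationOn A (Icc 0 1)).toReal := by
  refine le_of_forall_pos (fun ε hε => ?_)
  obtain ⟨δ1, hδ1, H1⟩ := h (ε/2) (by linarith)
  obtain ⟨δ2, hδ2, H2⟩ := h' (ε/2) (by linarith)
  obtain ⟨N₀, hN₀⟩ := mesh_small (lt_min hδ1 hδ2)
  have hmesh := hN₀ N₀ le_rfl
  have hPs := unif_steps N₀ hmesh
  have hP1 : ∀ i < N₀ + 1, ((i:ℕ):ℝ)/((N₀:ℝ)+1) ≤ ((i+1:ℕ):ℝ)/((N₀:ℝ)+1) ∧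
      ((i+1:ℕ):ℝ)/((N₀:ℝ)+1) - ((i:ℕ):ℝ)/((N₀:ℝ)+1) ≤ δ1 ∧
      ((i:ℕ):ℝ)/((N₀:ℝ)+1) ∈ Icc (((i:ℕ):ℝ)/((N₀:ℝ)+1)) (((i+1:ℕ):ℝ)/((N₀:ℝ)+1)) :=
    fun i hi => ⟨(hPs i hi).1, le_trans (hPs i hi).2.1 (min_le_left _ _), (hPs i hi).2.2⟩
  have hP2 : ∀ i < N₀ + 1, ((i:ℕ):ℝ)/((N₀:ℝ)+1) ≤ ((i+1:ℕ):ℝ)/((N₀:ℝ)+1) ∧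
      ((i+1:ℕ):ℝ)/((N₀:ℝ)+1) - ((i:ℕ):ℝ)/((N₀:ℝ)+1) ≤ δ2 ∧
      ((i:ℕ):ℝ)/((N₀:ℝ)+1) ∈ Icc (((i:ℕ):ℝ)/((N₀:ℝ)+1)) (((i+1:ℕ):ℝ)/((N₀:ℝ)+1)) :=
    fun i hi => ⟨(hPs i hi).1, le_trans (hPs i hi).2.1 (min_le_right _ _), (hPs i hi).2.2⟩
  have hA1 := H1 (N₀+1) (fun i => (i:ℝ)/((N₀:ℝ)+1)) (fun i => (i:ℝ)/((N₀:ℝ)+1))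
    (Nat.succ_pos _) (unif_t0 N₀) (unif_tn N₀) hP1
  have hA2 := H2 (N₀+1) (fun i => (i:ℝ)/((N₀:ℝ)+1)) (fun i => (i:ℝ)/((N₀:ℝ)+1))
    (Nat.succ_pos _) (unif_t0 N₀) (unif_tn N₀) hP2
  have hmid : |(∑ i ∈ Finset.range (N₀+1), f ((i:ℝ)/((N₀:ℝ)+1)) *
        (A (((i+1:ℕ):ℝ)/((N₀:ℝ)+1)) - A (((i:ℕ):ℝ)/((N₀:ℝ)+1))))
      - (∑ i ∈ Finset.range (N₀+1), f' ((i:ℝ)/((N₀:ℝ)+1)) *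
        (A (((i+1:ℕ):ℝ)/((N₀:ℝ)+1)) - A (((i:ℕ):ℝ)/((N₀:ℝ)+1))))|
      ≤ M * (eVariationOn A (Icc 0 1)).toReal := by
    rw [← Finset.sum_sub_distrib]
    refine le_trans (Finset.abs_sum_le_sum_abs _ _) ?_
    have hbd : ∀ i ∈ Finset.range (N₀+1),
        |f ((i:ℝ)/((N₀:ℝ)+1)) * (A (((i+1:ℕ):ℝ)/((N₀:ℝ)+1)) - A (((i:ℕ):ℝ)/((N₀:ℝ)+1)))
          - f' ((i:ℝ)/((N₀:ℝ)+1)) * (A (((i+1:ℕ):ℝ)/((N₀:ℝ)+1)) - A (((i:ℕ):ℝ)/((N₀:ℝ)+1)))|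
        ≤ M * |A (((i+1:ℕ):ℝ)/((N₀:ℝ)+1)) - A (((i:ℕ):ℝ)/((N₀:ℝ)+1))| := by
      intro i hi
      have hi' := Finset.mem_range.mp hi
      rw [← sub_mul, abs_mul]
      refine mul_le_mul_of_nonneg_right ?_ (abs_nonneg _)
      refine hM _ ?_
      constructor
      · positivity
      · rw [div_le_one (by positivity)]
        have : (i:ℝ) ≤ (N₀:ℝ) := Nat.cast_le.mpr (Nat.lt_succ_iff.mp hi')
        linarith
    refine le_trans (Finset.sum_le_sum hbd) ?_
    rw [← Finset.mul_sum]
    have hM0 : 0 ≤ M := by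
      have := hM 0 ⟨le_rfl, by norm_num⟩
      exact le_trans (abs_nonneg _) this
    refine mul_le_mul_of_nonneg_left ?_ hM0
    exact sum_abs_deltaA_le hA (unif_t0 N₀) (unif_tn N₀) (fun i hi => (hPs i hi).1)
  set Sf := (∑ i ∈ Finset.range (N₀+1), f ((i:ℝ)/((N₀:ℝ)+1)) *
        (A (((i+1:ℕ):ℝ)/((N₀:ℝ)+1)) - A (((i:ℕ):ℝ)/((N₀:ℝ)+1)))) with hSf
  set Sf' := (∑ i ∈ Finset.range (N₀+1), f' ((i:ℝ)/((N₀:ℝ)+1)) *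
        (A (((i+1:ℕ):ℝ)/((N₀:ℝ)+1)) - A (((i:ℕ):ℝ)/((N₀:ℝ)+1)))) with hSf'
  calc |I - I'| ≤ |I - Sf| + |Sf - I'| := abs_sub_le _ _ _
    _ ≤ |I - Sf| + (|Sf - Sf'| + |Sf' - I'|) := add_le_add_right (abs_sub_le _ _ _) _
    _ ≤ ε/2 + (M * (eVariationOn A (Icc 0 1)).toReal + ε/2) := by
        refine add_le_add ?_ (add_le_add hmid hA2)
        rw [abs_sub_comm]
        exact hA1
    _ = M * (eVariationOn A (Icc 0 1)).toReal + ε := by ring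

end RSP3

namespace PB
variable {q : ℝ}

lemma rho_pos (hq : 1 < q) : 0 < 1/(q-1) := by
  have : 0 < q - 1 := by linarith
  positivity

lemma psiQInv_zero (q : ℝ) : psiQInv q 0 = 0 := by simp [psiQInv]

lemma psiQInv_neg (q x : ℝ) : psiQInv q (-x) = - psiQInv q x := by
  simp [psiQInv, abs_neg, mul_neg]

lemma psiQInv_pos_eq (hq : 1 < q) {x : ℝ} (hx : 0 < x) : psiQInv q x = x ^ (1/(q-1)) := by
  unfold psiQInv
  rw [abs_of_pos hx, ← Real.rpow_add_one hx.ne']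
  congr 1
  have : q - 1 ≠ 0 := by intro h; rw [sub_eq_zero] at h; exact (lt_irrefl q (by rw [← h] at hq; exact hq))
  field_simp
  norm_num

lemma abs_psiQInv (hq : 1 < q) (x : ℝ) : |psiQInv q x| = |x| ^ (1/(q-1)) := by
  rcases lt_trichotomy x 0 with hx | rfl | hx
  · have h1 : psiQInv q x = - psiQInv q (-x) := by rw [psiQInv_neg, neg_neg]
    rw [h1, abs_neg, psiQInv_pos_eq hq (by linarith : (0:ℝ) < -x), abs_of_neg hx]
    rw [abs_of_pos (Real.rpow_pos_of_pos (by linarith) _)]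
  · rw [psiQInv_zero, abs_zero, Real.zero_rpow (ne_of_gt (rho_pos hq))]
  · rw [psiQInv_pos_eq hq hx, abs_of_pos hx, abs_of_pos (Real.rpow_pos_of_pos hx _)]

lemma psiQInv_continuous (hq : 1 < q) : Continuous (psiQInv q) := by
  rw [continuous_iff_continuousAt]
  intro x
  rcases eq_or_ne x 0 with rfl | hx
  · have habs : Continuous fun y : ℝ => |y| ^ (1/(q-1)) :=
      continuous_iff_continuousAt.mpr fun y =>
        (Real.continuousAt_rpow_const _ _ (Or.inr (rho_pos hq).le)).comp
          continuous_abs.continuousAt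
    unfold ContinuousAt
    rw [psiQInv_zero]
    refine squeeze_zero_norm (a := fun y => |y| ^ (1/(q-1)))
      (fun y => le_of_eq (by rw [Real.norm_eq_abs, abs_psiQInv hq])) ?_
    have h2 := habs.tendsto 0
    rw [abs_zero, Real.zero_rpow (ne_of_gt (rho_pos hq))] at h2
    exact h2
  · unfold psiQInv
    exact ContinuousAt.mul
      ((Real.continuousAt_rpow_const _ _ (Or.inl (abs_ne_zero.mpr hx))).comp
        continuous_abs.continuousAt) continuousAt_id

lemma psiQInv_strictMono (hq : 1 < q) : StrictMono (psiQInv q) := by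
  have key : ∀ a b : ℝ, 0 ≤ a → a < b → psiQInv q a < psiQInv q b := by
    intro a b ha hab
    have hb : 0 < b := lt_of_le_of_lt ha hab
    rw [psiQInv_pos_eq hq hb]
    rcases eq_or_lt_of_le ha with h | ha'
    · rw [← h, psiQInv_zero]; exact Real.rpow_pos_of_pos hb _
    · rw [psiQInv_pos_eq hq ha']
      exact Real.rpow_lt_rpow ha hab (rho_pos hq)
  intro a b hab
  rcases le_or_gt 0 a with ha | ha
  · exact key a b ha hab
  · rcases le_or_gt b 0 with hb | hb
    · have := key (-b) (-a) (by linarith) (by linarith)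
      rw [psiQInv_neg, psiQInv_neg] at this
      linarith
    · have h1 : psiQInv q a < 0 := by
        have := key 0 (-a) le_rfl (by linarith)
        rw [psiQInv_zero, psiQInv_neg] at this
        linarith
      have h2 : 0 < psiQInv q b := by
        have := key 0 b le_rfl hb
        rwa [psiQInv_zero] at this
      linarith

lemma psiQInv_tendsto_atTop (hq : 1 < q) : Tendsto (psiQInv q) atTop atTop := by
  refine Tendsto.congr' ?_ (tendsto_rpow_atTop (rho_pos hq))
  filter_upwards [eventually_gt_atTop (0:ℝ)] with x hx
  exact (psiQInv_pos_eq hq hx).symm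

lemma psiQInv_tendsto_atBot (hq : 1 < q) : Tendsto (psiQInv q) atBot atBot := by
  have h1 : Tendsto (fun x : ℝ => - psiQInv q (-x)) atBot atBot :=
    (tendsto_neg_atTop_atBot).comp ((psiQInv_tendsto_atTop hq).comp tendsto_neg_atBot_atTop)
  refine Tendsto.congr (fun x => ?_) h1
  rw [psiQInv_neg, neg_neg]

lemma extC_cont (v : C01) : Continuous (extC v) := v.continuous.comp continuous_projIcc

/-- `(u,v) ↦ (t ↦ g t (u t) (v t))` as a map into `C[0,1]`. -/
def thetaMap (g : ℝ → ℝ → ℝ → ℝ) (hg : Continuous fun p : ℝ × ℝ × ℝ => g p.1 p.2.1 p.2.2)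
    (p : C01 × C01) : C01 :=
  ⟨fun t => g t (p.1 t) (p.2 t),
    hg.comp (continuous_subtype_val.prodMk ((map_continuous p.1).prodMk (map_continuous p.2)))⟩

lemma thetaMap_continuous (g : ℝ → ℝ → ℝ → ℝ)
    (hg : Continuous fun p : ℝ × ℝ × ℝ => g p.1 p.2.1 p.2.2) :
    Continuous (thetaMap g hg) := by
  apply ContinuousMap.continuous_of_continuous_uncurry
  have hc : Continuous fun p : (C01 × C01) × Icc (0:ℝ) 1 =>
      (((p.2:ℝ), (p.1.1 p.2, p.1.2 p.2)) : ℝ × ℝ × ℝ) := by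
    refine Continuous.prodMk ?_ (Continuous.prodMk ?_ ?_)
    · exact continuous_subtype_val.comp continuous_snd
    · exact continuous_eval.comp ((continuous_fst.comp continuous_fst).prodMk continuous_snd)
    · exact continuous_eval.comp ((continuous_snd.comp continuous_fst).prodMk continuous_snd)
  exact hg.comp hc

/-- The primitive map `w ↦ (s ↦ ∫₀ˢ w̃)`. -/
def primMap (w : C01) : C01 :=
  ⟨fun s => ∫ τ in (0:ℝ)..(s:ℝ), extC w τ,
    (intervalIntegral.continuous_primitive
      (fun a b => (extC_cont w).intervalIntegrable a b) 0).comp continuous_subtype_val⟩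

lemma primMap_lipschitz : LipschitzWith 1 primMap := by
  apply LipschitzWith.of_dist_le_mul
  intro w w'
  rw [NNReal.coe_one, one_mul, ContinuousMap.dist_le dist_nonneg]
  intro s
  have hint : ∀ z : C01, IntervalIntegrable (extC z) volume 0 (s:ℝ) :=
    fun z => (extC_cont z).intervalIntegrable _ _
  rw [Real.dist_eq]
  show |(∫ τ in (0:ℝ)..(s:ℝ), extC w τ) - ∫ τ in (0:ℝ)..(s:ℝ), extC w' τ| ≤ dist w w'
  rw [← intervalIntegral.integral_sub (hint w) (hint w')]
  have hb : ∀ x ∈ Set.uIoc (0:ℝ) (s:ℝ), ‖extC w x - extC w' x‖ ≤ dist w w' := by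
    intro x _
    rw [Real.norm_eq_abs, ← Real.dist_eq]
    exact ContinuousMap.dist_apply_le_dist _
  calc ‖∫ τ in (0:ℝ)..(s:ℝ), (extC w τ - extC w' τ)‖
      ≤ dist w w' * |(s:ℝ) - 0| := intervalIntegral.norm_integral_le_of_norm_le_const hb
    _ ≤ dist w w' * 1 := by
        refine mul_le_mul_of_nonneg_left ?_ dist_nonneg
        rw [sub_zero, abs_le]
        exact ⟨by linarith [s.2.1], s.2.2⟩
    _ = dist w w' := mul_one _

/-- Integration over `[0,1]` as a functional on `C[0,1]`. -/
def intMap (z : C01) : ℝ := ∫ s in (0:ℝ)..1, extC z s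

lemma intMap_lipschitz : LipschitzWith 1 intMap := by
  apply LipschitzWith.of_dist_le_mul
  intro z z'
  rw [NNReal.coe_one, one_mul, Real.dist_eq]
  unfold intMap
  rw [← intervalIntegral.integral_sub ((extC_cont z).intervalIntegrable _ _)
    ((extC_cont z').intervalIntegrable _ _)]
  have hb : ∀ x ∈ Set.uIoc (0:ℝ) 1, ‖extC z x - extC z' x‖ ≤ dist z z' := by
    intro x _
    rw [Real.norm_eq_abs, ← Real.dist_eq]
    exact ContinuousMap.dist_apply_le_dist _
  calc ‖∫ s in (0:ℝ)..1, (extC z s - extC z' s)‖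
      ≤ dist z z' * |(1:ℝ) - 0| := intervalIntegral.norm_integral_le_of_norm_le_const hb
    _ = dist z z' := by norm_num

end PB

namespace PB2
open PB

variable (q : ℝ) (g : ℝ → ℝ → ℝ → ℝ)

def psiCM (hq : 1 < q) : C(ℝ, ℝ) := ⟨psiQInv q, psiQInv_continuous hq⟩

def Fmap (hq : 1 < q) (hg : Continuous fun p : ℝ × ℝ × ℝ => g p.1 p.2.1 p.2.2)
    (p : C01 × C01 × ℝ) : ℝ :=
  intMap ((psiCM q hq).comp
    (ContinuousMap.const _ p.2.2 - primMap (thetaMap g hg (p.1, p.2.1))))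

lemma Fmap_continuous (hq : 1 < q) (hg : Continuous fun p : ℝ × ℝ × ℝ => g p.1 p.2.1 p.2.2) :
    Continuous (Fmap q g hq hg) := by
  apply intMap_lipschitz.continuous.comp
  apply (ContinuousMap.continuous_postcomp (psiCM q hq)).comp
  apply Continuous.sub
  · exact ContinuousMap.continuous_const'.comp (continuous_snd.comp continuous_snd)
  · exact primMap_lipschitz.continuous.comp ((thetaMap_continuous g hg).comp
      (continuous_fst.prodMk (continuous_fst.comp continuous_snd)))

/-- The shooting functional. -/
def phi (u v : C01) (c : ℝ) : ℝ :=
  ∫ s in (0:ℝ)..1, psiQInv q (c - ∫ τ in (0:ℝ)..s, g τ (extC u τ) (extC v τ))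

lemma phi_eq_Fmap (hq : 1 < q) (hg : Continuous fun p : ℝ × ℝ × ℝ => g p.1 p.2.1 p.2.2)
    (u v : C01) (c : ℝ) : phi q g u v c = Fmap q g hq hg (u, v, c) := by
  unfold phi Fmap intMap
  refine (intervalIntegral.integral_congr ?_).symm
  intro s hs
  rw [Set.uIcc_of_le (by norm_num : (0:ℝ) ≤ 1)] at hs
  have h1 : extC ((psiCM q hq).comp
        (ContinuousMap.const _ c - primMap (thetaMap g hg (u, v)))) s
      = psiQInv q (c - ∫ τ in (0:ℝ)..s, extC (thetaMap g hg (u, v)) τ) := by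
    unfold extC
    rw [Set.projIcc_of_mem _ hs]
    rfl
  rw [h1]
  congr 2
  refine intervalIntegral.integral_congr ?_
  intro τ hτ
  rw [Set.uIcc_of_le hs.1] at hτ
  have hτ' : τ ∈ Icc (0:ℝ) 1 := ⟨hτ.1, le_trans hτ.2 hs.2⟩
  show extC (thetaMap g hg (u, v)) τ = g τ (extC u τ) (extC v τ)
  unfold extC
  rw [Set.projIcc_of_mem _ hτ']
  rfl

lemma w_cont (hg : Continuous fun p : ℝ × ℝ × ℝ => g p.1 p.2.1 p.2.2)
    (u v : C01) : Continuous fun τ => g τ (extC u τ) (extC v τ) :=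
  hg.comp (continuous_id.prodMk ((extC_cont u).prodMk (extC_cont v)))

lemma Gp_cont (hg : Continuous fun p : ℝ × ℝ × ℝ => g p.1 p.2.1 p.2.2) (u v : C01) :
    Continuous fun s => ∫ τ in (0:ℝ)..s, g τ (extC u τ) (extC v τ) :=
  intervalIntegral.continuous_primitive
    (fun a b => (w_cont g hg u v).intervalIntegrable a b) 0

lemma phi_integrand_intble (hq : 1 < q)
    (hg : Continuous fun p : ℝ × ℝ × ℝ => g p.1 p.2.1 p.2.2) (u v : C01) (c : ℝ) :
    IntervalIntegrable
      (fun s => psiQInv q (c - ∫ τ in (0:ℝ)..s, g τ (extC u τ) (extC v τ))) volume 0 1 :=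
  ((psiQInv_continuous hq).comp (continuous_const.sub (Gp_cont g hg u v))).intervalIntegrable _ _

lemma phi_strictMono (hq : 1 < q) (hg : Continuous fun p : ℝ × ℝ × ℝ => g p.1 p.2.1 p.2.2)
    (u v : C01) : StrictMono (phi q g u v) := by
  intro c c' hcc
  have hpos := intervalIntegral.intervalIntegral_pos_of_pos_on
    (f := fun s => psiQInv q (c' - ∫ τ in (0:ℝ)..s, g τ (extC u τ) (extC v τ))
      - psiQInv q (c - ∫ τ in (0:ℝ)..s, g τ (extC u τ) (extC v τ)))
    ((phi_integrand_intble q g hq hg u v c').sub (phi_integrand_intble q g hq hg u v c))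
    (fun x _ => sub_pos.mpr (psiQInv_strictMono hq (by linarith))) one_pos
  rw [intervalIntegral.integral_sub (phi_integrand_intble q g hq hg u v c')
    (phi_integrand_intble q g hq hg u v c)] at hpos
  have : phi q g u v c' - phi q g u v c > 0 := hpos
  linarith

lemma phi_continuous (hq : 1 < q) (hg : Continuous fun p : ℝ × ℝ × ℝ => g p.1 p.2.1 p.2.2)
    (u v : C01) : Continuous (phi q g u v) := by
  have h1 : Continuous fun c : ℝ => Fmap q g hq hg (u, v, c) :=
    (Fmap_continuous q g hq hg).comp
      (continuous_const.prodMk (continuous_const.prodMk continuous_id))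
  exact h1.congr fun c => (phi_eq_Fmap q g hq hg u v c).symm

lemma phi_exists_unique (hq : 1 < q) (hg : Continuous fun p : ℝ × ℝ × ℝ => g p.1 p.2.1 p.2.2)
    (u v : C01) (R : ℝ) : ∃! c : ℝ, phi q g u v c = R := by
  obtain ⟨K, hK⟩ := isCompact_Icc.exists_bound_of_continuousOn (Gp_cont g hg u v).continuousOn
  have hlb : ∀ c, psiQInv q (c - K) ≤ phi q g u v c := by
    intro c
    have h0 : (∫ _s in (0:ℝ)..1, psiQInv q (c - K)) = psiQInv q (c - K) := by simp
    rw [← h0]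
    refine intervalIntegral.integral_mono_on (by norm_num) intervalIntegrable_const
      (phi_integrand_intble q g hq hg u v c) ?_
    intro x hx
    refine (psiQInv_strictMono hq).monotone ?_
    have h2 := hK x hx
    rw [Real.norm_eq_abs] at h2
    have h3 := (abs_le.mp h2).2
    linarith
  have hub : ∀ c, phi q g u v c ≤ psiQInv q (c + K) := by
    intro c
    have h0 : (∫ _s in (0:ℝ)..1, psiQInv q (c + K)) = psiQInv q (c + K) := by simp
    rw [← h0]
    refine intervalIntegral.integral_mono_on (by norm_num)
      (phi_integrand_intble q g hq hg u v c) intervalIntegrable_const ?_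
    intro x hx
    refine (psiQInv_strictMono hq).monotone ?_
    have h2 := hK x hx
    rw [Real.norm_eq_abs] at h2
    have h3 := (abs_le.mp h2).1
    linarith
  have htop : Tendsto (phi q g u v) atTop atTop := by
    refine tendsto_atTop_mono hlb ?_
    have h1 : Tendsto (fun c : ℝ => psiQInv q (c + -K)) atTop atTop :=
      (psiQInv_tendsto_atTop hq).comp (tendsto_atTop_add_const_right atTop (-K) tendsto_id)
    exact h1.congr fun c => by rw [← sub_eq_add_neg]
  have hbot : Tendsto (phi q g u v) atBot atBot := by
    refine tendsto_atBot_mono hub ?_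
    exact (psiQInv_tendsto_atBot hq).comp (tendsto_atBot_add_const_right atBot K tendsto_id)
  obtain ⟨lo, hlo⟩ := (hbot.eventually_le_atBot R).exists
  obtain ⟨hi, hhi⟩ := (htop.eventually_ge_atTop R).exists
  have hR : R ∈ Icc (phi q g u v (min lo hi)) (phi q g u v (max lo hi)) :=
    ⟨le_trans ((phi_strictMono q g hq hg u v).monotone (min_le_left _ _)) hlo,
     le_trans hhi ((phi_strictMono q g hq hg u v).monotone (le_max_right _ _))⟩
  obtain ⟨c, _, hc⟩ := intermediate_value_Icc min_le_max
    (phi_continuous q g hq hg u v).continuousOn hR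
  exact ⟨c, hc, fun c' hc' => (phi_strictMono q g hq hg u v).injective (hc'.trans hc.symm)⟩

end PB2

namespace PB3
open PB PB2

def rsVal (A : ℝ → ℝ) (hA : BoundedVariationOn A (Set.Icc 0 1)) (z : C01) : ℝ :=
  (RSP3.exists_rs (PB.extC_cont z) hA).choose

lemma rsVal_spec (A : ℝ → ℝ) (hA : BoundedVariationOn A (Set.Icc 0 1)) (z : C01) :
    IsRSIntegral (extC z) A (rsVal A hA z) :=
  (RSP3.exists_rs (PB.extC_cont z) hA).choose_spec

lemma rsVal_continuous (A : ℝ → ℝ) (hA : BoundedVariationOn A (Set.Icc 0 1)) :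
    Continuous (rsVal A hA) := by
  have hlip : ∀ z z' : C01, dist (rsVal A hA z) (rsVal A hA z')
      ≤ (eVariationOn A (Icc 0 1)).toReal * dist z z' := by
    intro z z'
    rw [Real.dist_eq]
    have hb : ∀ x ∈ Icc (0:ℝ) 1, |extC z x - extC z' x| ≤ dist z z' := by
      intro x _
      rw [← Real.dist_eq]
      exact ContinuousMap.dist_apply_le_dist _
    have h := RSP3.rs_dist hA (rsVal_spec A hA z) (rsVal_spec A hA z') hb
    calc |rsVal A hA z - rsVal A hA z'|
        ≤ dist z z' * (eVariationOn A (Icc 0 1)).toReal := h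
      _ = (eVariationOn A (Icc 0 1)).toReal * dist z z' := mul_comm _ _
  refine (LipschitzWith.of_dist_le_mul
    (K := (eVariationOn A (Icc 0 1)).toReal.toNNReal) ?_).continuous
  intro z z'
  refine le_trans (hlip z z') (mul_le_mul_of_nonneg_right ?_ dist_nonneg)
  exact le_of_eq (Real.coe_toNNReal _ ENNReal.toReal_nonneg).symm

end PB3

/-- Lemma 6: existence, uniqueness and continuity of the shooting constant
`c(u,v)` for the nonlocal problem. -/
theorem shooting_constant_exists_unique_continuous
    (q : ℝ) (hq : 1 < q)
    (g : ℝ → ℝ → ℝ → ℝ) (hg : Continuous fun p : ℝ × ℝ × ℝ => g p.1 p.2.1 p.2.2)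
    (h₀ h₁ : ℝ → ℝ) (hh₀ : Continuous h₀) (hh₁ : Continuous h₁)
    (A₀ A₁ : ℝ → ℝ)
    (hA₀ : BoundedVariationOn A₀ (Set.Icc 0 1))
    (hA₁ : BoundedVariationOn A₁ (Set.Icc 0 1)) :
    ∃ c : C01 → C01 → ℝ,
      (∀ u v : C01, ∃ I₀ I₁ : ℝ,
        IsRSIntegral (fun s => h₀ (extC v s)) A₀ I₀ ∧
        IsRSIntegral (fun s => h₁ (extC v s)) A₁ I₁ ∧
        (∫ s in (0:ℝ)..1,
            psiQInv q (c u v - ∫ τ in (0:ℝ)..s, g τ (extC u τ) (extC v τ)))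
          = I₁ - I₀ ∧
        ∀ c' : ℝ,
          (∫ s in (0:ℝ)..1,
              psiQInv q (c' - ∫ τ in (0:ℝ)..s, g τ (extC u τ) (extC v τ)))
            = I₁ - I₀ → c' = c u v) ∧
      Continuous fun p : C01 × C01 => c p.1 p.2 := by
  classical
  set h₀cm : C(ℝ, ℝ) := ⟨h₀, hh₀⟩ with hh₀cm
  set h₁cm : C(ℝ, ℝ) := ⟨h₁, hh₁⟩ with hh₁cm
  set R : C01 → ℝ := fun v => PB3.rsVal A₁ hA₁ (h₁cm.comp v) - PB3.rsVal A₀ hA₀ (h₀cm.comp v)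
    with hRdef
  have hRcont : Continuous R :=
    ((PB3.rsVal_continuous A₁ hA₁).comp (ContinuousMap.continuous_postcomp h₁cm)).sub
      ((PB3.rsVal_continuous A₀ hA₀).comp (ContinuousMap.continuous_postcomp h₀cm))
  have hex : ∀ p : C01 × C01, ∃! c : ℝ, PB2.phi q g p.1 p.2 c = R p.2 := fun p =>
    PB2.phi_exists_unique q g hq hg p.1 p.2 (R p.2)
  set cF : C01 × C01 → ℝ := fun p => (hex p).choose with hcF
  have hspec : ∀ p : C01 × C01, PB2.phi q g p.1 p.2 (cF p) = R p.2 := fun p =>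
    (hex p).choose_spec.1
  have huniq : ∀ (p : C01 × C01) (c' : ℝ), PB2.phi q g p.1 p.2 c' = R p.2 → c' = cF p :=
    fun p c' h => (hex p).choose_spec.2 c' h
  have hFspec : ∀ p : C01 × C01, PB2.Fmap q g hq hg (p.1, p.2, cF p) = R p.2 := fun p => by
    rw [← PB2.phi_eq_Fmap q g hq hg p.1 p.2 (cF p)]
    exact hspec p
  have hFm : ∀ p : C01 × C01, StrictMono fun c => PB2.Fmap q g hq hg (p.1, p.2, c) := by
    intro p a b hab
    show PB2.Fmap q g hq hg (p.1, p.2, a) < PB2.Fmap q g hq hg (p.1, p.2, b)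
    rw [← PB2.phi_eq_Fmap q g hq hg p.1 p.2 a, ← PB2.phi_eq_Fmap q g hq hg p.1 p.2 b]
    exact PB2.phi_strictMono q g hq hg p.1 p.2 hab
  have hcont : Continuous cF := by
    rw [continuous_iff_continuousAt]
    intro p₀
    show Tendsto cF (nhds p₀) (nhds (cF p₀))
    rw [Metric.tendsto_nhds]
    intro ε hε
    set c₀ := cF p₀ with hc₀
    have h1 : PB2.Fmap q g hq hg (p₀.1, p₀.2, c₀ - ε/2) < R p₀.2 := by
      rw [← hFspec p₀]
      exact hFm p₀ (by linarith)
    have h2 : R p₀.2 < PB2.Fmap q g hq hg (p₀.1, p₀.2, c₀ + ε/2) := by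
      rw [← hFspec p₀]
      exact hFm p₀ (by linarith)
    have hc1 : Continuous fun p : C01 × C01 => PB2.Fmap q g hq hg (p.1, p.2, c₀ - ε/2) :=
      (PB2.Fmap_continuous q g hq hg).comp
        (continuous_fst.prodMk (continuous_snd.prodMk continuous_const))
    have hc2 : Continuous fun p : C01 × C01 => PB2.Fmap q g hq hg (p.1, p.2, c₀ + ε/2) :=
      (PB2.Fmap_continuous q g hq hg).comp
        (continuous_fst.prodMk (continuous_snd.prodMk continuous_const))
    have hR2 : Continuous fun p : C01 × C01 => R p.2 := hRcont.comp continuous_snd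
    have hU : IsOpen {p : C01 × C01 | PB2.Fmap q g hq hg (p.1, p.2, c₀ - ε/2) < R p.2
        ∧ R p.2 < PB2.Fmap q g hq hg (p.1, p.2, c₀ + ε/2)} :=
      (isOpen_lt hc1 hR2).inter (isOpen_lt hR2 hc2)
    have hmem : p₀ ∈ {p : C01 × C01 | PB2.Fmap q g hq hg (p.1, p.2, c₀ - ε/2) < R p.2
        ∧ R p.2 < PB2.Fmap q g hq hg (p.1, p.2, c₀ + ε/2)} := ⟨h1, h2⟩
    filter_upwards [hU.mem_nhds hmem] with p hp
    have hlt1 : c₀ - ε/2 < cF p := by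
      by_contra hcon
      push_neg at hcon
      have hmono := (hFm p).monotone hcon
      rw [hFspec p] at hmono
      exact absurd (lt_of_le_of_lt hmono hp.1) (lt_irrefl _)
    have hlt2 : cF p < c₀ + ε/2 := by
      by_contra hcon
      push_neg at hcon
      have hmono := (hFm p).monotone hcon
      rw [hFspec p] at hmono
      exact absurd (lt_of_lt_of_le hp.2 hmono) (lt_irrefl _)
    rw [Real.dist_eq, abs_lt]
    constructor <;> linarith
  refine ⟨fun u v => cF (u, v), fun u v => ?_, hcont⟩
  refine ⟨PB3.rsVal A₀ hA₀ (h₀cm.comp v), PB3.rsVal A₁ hA₁ (h₁cm.comp v), ?_, ?_, ?_, ?_⟩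
  · exact PB3.rsVal_spec A₀ hA₀ (h₀cm.comp v)
  · exact PB3.rsVal_spec A₁ hA₁ (h₁cm.comp v)
  · exact hspec (u, v)
  · exact fun c' hc' => huniq (u, v) c' hc'

end
end
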